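/- arXiv:1404.3416 — 5 statements merged into one kernel-verified Lean document; each statement's English description precedes it below -/
import Mathlib

section
/- An endofunctor of the simplex category is determined, up to natural isomorphism, by the simplicial interval it induces: if T₁, T₂: Δ → Δ are functors such that the functors Δᵒᵖ → 𝓘 sending [n] to Hom_Δ(T₁([n]),[1]) and to Hom_Δ(T₂([n]),[1]) respectively (each hom-set equipped with the pointwise order, morphisms acting by Tᵢ followed by precomposition) are naturally isomorphic, then T₁ and T₂ are naturally isomorphic (hence equal, since Δ has no non-identity isomorphisms). -/
open CategoryTheory Simplicial Topology

namespace GES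

lemma count_ge (N c : ℕ) :
    ((Finset.univ : Finset (Fin N)).filter (fun k : Fin N => c ≤ (k : ℕ))).card = N - c := by
  by_cases h : c < N
  · have heq : (Finset.univ : Finset (Fin N)).filter (fun k : Fin N => c ≤ (k : ℕ)) =
        Finset.Ici (⟨c, h⟩ : Fin N) := by
      ext k
      simp [Finset.mem_Ici, Fin.le_def]
    rw [heq, Fin.card_Ici]
  · have heq : (Finset.univ : Finset (Fin N)).filter (fun k : Fin N => c ≤ (k : ℕ)) = ∅ := by
      rw [Finset.filter_eq_empty_iff]
      intro k _
      have := k.isLt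
      omega
    rw [heq]
    simp
    omega

lemma count_le (N c : ℕ) :
    ((Finset.univ : Finset (Fin N)).filter (fun k : Fin N => (k : ℕ) ≤ c)).card =
      min (c + 1) N := by
  by_cases h : c < N
  · have heq : (Finset.univ : Finset (Fin N)).filter (fun k : Fin N => (k : ℕ) ≤ c) =
        Finset.Iic (⟨c, h⟩ : Fin N) := by
      ext k
      simp [Finset.mem_Iic, Fin.le_def]
    rw [heq, Fin.card_Iic]
    show c + 1 = min (c + 1) N
    omega
  · have heq : (Finset.univ : Finset (Fin N)).filter (fun k : Fin N => (k : ℕ) ≤ c) =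
        Finset.univ := by
      rw [Finset.filter_eq_self]
      intro k _
      have := k.isLt
      omega
    rw [heq]
    simp
    omega

lemma card_filter_upclosed {M : ℕ} (p : Fin M → Prop) [DecidablePred p]
    (hp : ∀ a b : Fin M, a ≤ b → p a → p b) (k : Fin M) :
    p k ↔ M ≤ (k : ℕ) + (Finset.univ.filter p).card := by
  constructor
  · intro hk
    have hsub : Finset.Ici k ⊆ Finset.univ.filter p := fun l hl =>
      Finset.mem_filter.mpr ⟨Finset.mem_univ _, hp k l (Finset.mem_Ici.mp hl) hk⟩
    have hcard := Finset.card_le_card hsub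
    rw [Fin.card_Ici] at hcard
    have := k.isLt
    omega
  · intro hM
    by_contra hk
    have hsub : Finset.univ.filter p ⊆ Finset.Ioi k := by
      intro l hl
      rw [Finset.mem_Ioi]
      rcases lt_or_ge k l with h | h
      · exact h
      · exact absurd (hp l k h (Finset.mem_filter.mp hl).2) hk
    have hcard := Finset.card_le_card hsub
    rw [Fin.card_Ioi] at hcard
    have := k.isLt
    omega

lemma card_filter_downclosed {M : ℕ} (p : Fin M → Prop) [DecidablePred p]
    (hp : ∀ a b : Fin M, a ≤ b → p b → p a) (k : Fin M) :
    p k ↔ (k : ℕ) < (Finset.univ.filter p).card := by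
  constructor
  · intro hk
    have hsub : Finset.Iic k ⊆ Finset.univ.filter p := fun l hl =>
      Finset.mem_filter.mpr ⟨Finset.mem_univ _, hp l k (Finset.mem_Iic.mp hl) hk⟩
    have hcard := Finset.card_le_card hsub
    rw [Fin.card_Iic] at hcard
    omega
  · intro hM
    by_contra hk
    have hsub : Finset.univ.filter p ⊆ Finset.Iio k := by
      intro l hl
      rw [Finset.mem_Iio]
      rcases lt_or_ge l k with h | h
      · exact h
      · exact absurd (hp k l h (Finset.mem_filter.mp hl).2) hk
    have hcard := Finset.card_le_card hsub
    rw [Fin.card_Iio] at hcard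
    omega

/-- The interval category: the object `IntervalCat.mk l` is the finite linear order
`{0, 1, …, l+1}` (an interval `{m}` with `m = l+1 ≥ 1`); morphisms are order preserving
maps preserving the least and the greatest elements. -/
structure IntervalCat : Type where
  len : ℕ

instance : Category IntervalCat where
  Hom a b := {f : Fin (a.len + 2) →o Fin (b.len + 2) //
    f 0 = 0 ∧ f (Fin.last (a.len + 1)) = Fin.last (b.len + 1)}
  id a := ⟨OrderHom.id, rfl, rfl⟩
  comp f g := ⟨g.1.comp f.1, by simp [f.2.1, g.2.1], by simp [f.2.2, g.2.2]⟩

/-- The underlying monotone map of `F(f)` for `f : [m] → [n]` in `Δ`: it sends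
`i ∈ Hom([n],[1]) ≅ {n+1}` to the element of `Hom([m],[1]) ≅ {m+1}` obtained by
precomposing with `f`, namely `#{k : f(k) ≥ n+1-i}`. -/
def FHom {n m : SimplexCategory} (f : m ⟶ n) : Fin (n.len + 2) →o Fin (m.len + 2) where
  toFun i :=
    ⟨(Finset.univ.filter (fun k : Fin (m.len + 1) =>
        n.len + 1 ≤ (f.toOrderHom k : ℕ) + (i : ℕ))).card, by
      have := Finset.card_filter_le (Finset.univ : Finset (Fin (m.len + 1)))
        (fun k => n.len + 1 ≤ (f.toOrderHom k : ℕ) + (i : ℕ))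
      simp only [Finset.card_univ, Fintype.card_fin] at this
      omega⟩
  monotone' := by
    intro i j hij
    have hij' : (i : ℕ) ≤ j := hij
    refine Fin.mk_le_mk.mpr (Finset.card_le_card ?_)
    intro k hk
    simp only [Finset.mem_filter, Finset.mem_univ, true_and] at hk ⊢
    omega

theorem FHom_zero {n m : SimplexCategory} (f : m ⟶ n) : FHom f 0 = 0 := by
  apply Fin.ext
  show (Finset.univ.filter (fun k : Fin (m.len + 1) =>
      n.len + 1 ≤ (f.toOrderHom k : ℕ) + ((0 : Fin (n.len + 2)) : ℕ))).card = 0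
  rw [Finset.card_eq_zero, Finset.filter_eq_empty_iff]
  intro k _
  have := (f.toOrderHom k).isLt
  simp only [Fin.val_zero]
  omega

theorem FHom_last {n m : SimplexCategory} (f : m ⟶ n) :
    FHom f (Fin.last (n.len + 1)) = Fin.last (m.len + 1) := by
  apply Fin.ext
  show (Finset.univ.filter (fun k : Fin (m.len + 1) =>
      n.len + 1 ≤ (f.toOrderHom k : ℕ) + ((Fin.last (n.len + 1) : Fin (n.len + 2)) : ℕ))).card = m.len + 1
  rw [Finset.filter_true_of_mem, Finset.card_univ, Fintype.card_fin]
  intro k _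
  simp only [Fin.val_last]
  omega

/-- The contravariant functor `F : Δᵒᵖ → 𝓘` sending `[n]` to `Hom_Δ([n],[1])` with the
pointwise order (realized as the interval `{n+1}`, the least element being the constant
map `0` and the greatest the constant map `1`), acting on morphisms by precomposition. -/
def F : SimplexCategoryᵒᵖ ⥤ IntervalCat where
  obj X := ⟨X.unop.len⟩
  map {X Y} φ := ⟨FHom φ.unop, FHom_zero φ.unop, FHom_last φ.unop⟩
  map_id X := by
    apply Subtype.ext
    apply OrderHom.ext
    funext i
    apply Fin.ext
    show (Finset.univ.filter (fun k : Fin (X.unop.len + 1) =>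
        X.unop.len + 1 ≤ ((𝟙 X.unop : _ ⟶ _).toOrderHom k : ℕ) + (i : ℕ))).card = (i : ℕ)
    have hi : (i : ℕ) < X.unop.len + 2 := i.isLt
    rw [Finset.filter_congr (fun k _ => show (X.unop.len + 1 ≤
        ((𝟙 X.unop : _ ⟶ _).toOrderHom k : ℕ) + (i : ℕ)) ↔
        (X.unop.len + 1 - (i : ℕ) ≤ (k : ℕ)) from by
      rw [SimplexCategory.id_toOrderHom]
      show X.unop.len + 1 ≤ (k : ℕ) + (i : ℕ) ↔ _
      omega)]
    rw [count_ge]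
    omega
  map_comp {X Y Z} φ ψ := by
    apply Subtype.ext
    apply OrderHom.ext
    funext i
    apply Fin.ext
    show (Finset.univ.filter (fun k : Fin (Z.unop.len + 1) =>
        X.unop.len + 1 ≤ (((φ ≫ ψ).unop.toOrderHom) k : ℕ) + (i : ℕ))).card =
      (FHom ψ.unop (FHom φ.unop i) : ℕ)
    show _ = (Finset.univ.filter (fun k : Fin (Z.unop.len + 1) =>
        Y.unop.len + 1 ≤ (ψ.unop.toOrderHom k : ℕ) + ((FHom φ.unop i : Fin _) : ℕ))).card
    refine congrArg Finset.card (Finset.filter_congr fun k _ => ?_)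
    have hup : ∀ a b : Fin (Y.unop.len + 1), a ≤ b →
        (fun l : Fin (Y.unop.len + 1) =>
          X.unop.len + 1 ≤ (φ.unop.toOrderHom l : ℕ) + (i : ℕ)) a →
        (fun l : Fin (Y.unop.len + 1) =>
          X.unop.len + 1 ≤ (φ.unop.toOrderHom l : ℕ) + (i : ℕ)) b := by
      intro a b hab ha
      have := φ.unop.toOrderHom.monotone hab
      simp only at ha ⊢
      have h2 : (φ.unop.toOrderHom a : ℕ) ≤ φ.unop.toOrderHom b := this
      omega
    have key := card_filter_upclosed
      (fun l : Fin (Y.unop.len + 1) =>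
        X.unop.len + 1 ≤ (φ.unop.toOrderHom l : ℕ) + (i : ℕ))
      hup (ψ.unop.toOrderHom k)
    show X.unop.len + 1 ≤ (φ.unop.toOrderHom (ψ.unop.toOrderHom k) : ℕ) + (i : ℕ) ↔ _
    exact key

/-- The underlying monotone map of `G(g)` for a morphism `g : {n} → {m}` of intervals:
`G(g)(i) = #(g⁻¹{0,…,i}) - 1`. -/
def GHom {a b : IntervalCat} (g : a ⟶ b) :
    Fin (b.len + 1) →o Fin (a.len + 1) where
  toFun i :=
    ⟨(Finset.univ.filter (fun j : Fin (a.len + 2) =>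
        (g.1 j : ℕ) ≤ (i : ℕ))).card - 1, by
      have hsub : Finset.univ.filter (fun j : Fin (a.len + 2) => (g.1 j : ℕ) ≤ (i : ℕ)) ⊆
          Finset.univ.erase (Fin.last (a.len + 1)) := by
        intro j hj
        simp only [Finset.mem_filter, Finset.mem_univ, true_and] at hj
        refine Finset.mem_erase.mpr ⟨?_, Finset.mem_univ _⟩
        intro e
        rw [e, g.2.2] at hj
        simp only [Fin.val_last] at hj
        have := i.isLt
        omega
      have hcard := Finset.card_le_card hsub
      rw [Finset.card_erase_of_mem (Finset.mem_univ _), Finset.card_univ] at hcard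
      simp only [Fintype.card_fin] at hcard
      omega⟩
  monotone' := by
    intro i j hij
    have hij' : (i : ℕ) ≤ j := hij
    refine Fin.mk_le_mk.mpr (Nat.sub_le_sub_right (Finset.card_le_card ?_) 1)
    intro k hk
    simp only [Finset.mem_filter, Finset.mem_univ, true_and] at hk ⊢
    omega

theorem GHom_card_pos {a b : IntervalCat} (g : a ⟶ b) (i : Fin (b.len + 1)) :
    0 < (Finset.univ.filter (fun j : Fin (a.len + 2) => (g.1 j : ℕ) ≤ (i : ℕ))).card :=
  Finset.card_pos.mpr ⟨0, Finset.mem_filter.mpr ⟨Finset.mem_univ _, by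
    rw [g.2.1]; exact Nat.zero_le _⟩⟩

/-- The contravariant functor `G : 𝓘 → Δ` sending the interval `{m}` to `[m-1]` and a
morphism `g` to the morphism `G(g)` with `G(g)(i) = #(g⁻¹{0,…,i}) - 1`. -/
def G : IntervalCat ⥤ SimplexCategoryᵒᵖ where
  obj a := Opposite.op (SimplexCategory.mk a.len)
  map {a b} g := Quiver.Hom.op
    (show SimplexCategory.mk b.len ⟶ SimplexCategory.mk a.len from
      SimplexCategory.Hom.mk (GHom g))
  map_id a := by
    apply Quiver.Hom.unop_inj
    apply SimplexCategory.Hom.ext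
    apply OrderHom.ext
    funext i
    apply Fin.ext
    show (Finset.univ.filter (fun j : Fin (a.len + 2) =>
        (((𝟙 a : a ⟶ a).1 j : Fin (a.len + 2)) : ℕ) ≤ (i : ℕ))).card - 1 = (i : ℕ)
    have hi : (i : ℕ) < a.len + 1 := i.isLt
    rw [Finset.filter_congr (fun j _ => show ((((𝟙 a : a ⟶ a).1 j : Fin (a.len + 2)) : ℕ)
        ≤ (i : ℕ)) ↔ ((j : ℕ) ≤ (i : ℕ)) from Iff.rfl)]
    rw [count_le]
    omega
  map_comp {a b c} g h := by
    apply Quiver.Hom.unop_inj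
    apply SimplexCategory.Hom.ext
    apply OrderHom.ext
    funext i
    apply Fin.ext
    have hi : (i : ℕ) < c.len + 1 := i.isLt
    show (Finset.univ.filter (fun j : Fin (a.len + 2) =>
        ((h.1 (g.1 j) : Fin (c.len + 2)) : ℕ) ≤ (i : ℕ))).card - 1 =
      (GHom g (GHom h i) : ℕ)
    show _ = (Finset.univ.filter (fun j : Fin (a.len + 2) =>
        (g.1 j : ℕ) ≤ ((GHom h i : Fin (b.len + 1)) : ℕ))).card - 1
    have hdown : ∀ x y : Fin (b.len + 2), x ≤ y →
        (fun l : Fin (b.len + 2) => ((h.1 l : Fin (c.len + 2)) : ℕ) ≤ (i : ℕ)) y →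
        (fun l : Fin (b.len + 2) => ((h.1 l : Fin (c.len + 2)) : ℕ) ≤ (i : ℕ)) x := by
      intro x y hxy hy
      have h2 : (h.1 x : ℕ) ≤ h.1 y := h.1.monotone hxy
      simp only at hy ⊢
      omega
    have hpos := GHom_card_pos h i
    have hcards : (Finset.univ.filter (fun j : Fin (a.len + 2) =>
        ((h.1 (g.1 j) : Fin (c.len + 2)) : ℕ) ≤ (i : ℕ))).card =
        (Finset.univ.filter (fun j : Fin (a.len + 2) =>
        (g.1 j : ℕ) ≤ ((GHom h i : Fin (b.len + 1)) : ℕ))).card := by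
      refine congrArg Finset.card (Finset.filter_congr fun j _ => ?_)
      have key := card_filter_downclosed
        (fun l : Fin (b.len + 2) => ((h.1 l : Fin (c.len + 2)) : ℕ) ≤ (i : ℕ))
        hdown (g.1 j)
      simp only at key
      show ((h.1 (g.1 j) : Fin (c.len + 2)) : ℕ) ≤ (i : ℕ) ↔
        (g.1 j : ℕ) ≤ ((GHom h i : Fin (b.len + 1)) : ℕ)
      rw [key]
      show _ ↔ (g.1 j : ℕ) ≤ (Finset.univ.filter (fun l : Fin (b.len + 2) =>
        ((h.1 l : Fin (c.len + 2)) : ℕ) ≤ (i : ℕ))).card - 1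
      omega
    rw [hcards]

lemma FHom_le_iff {m n : SimplexCategory} (f : m ⟶ n) (j : Fin (n.len + 2))
    (i : ℕ) (i' : ℕ) (hi' : i' < m.len + 1) (hii' : i + i' = m.len) :
    (FHom f j : ℕ) ≤ i ↔ (j : ℕ) ≤ n.len - (f.toOrderHom ⟨i', hi'⟩ : ℕ) := by
  have hup : ∀ a b : Fin (m.len + 1), a ≤ b →
      (fun k : Fin (m.len + 1) => n.len + 1 ≤ (f.toOrderHom k : ℕ) + (j : ℕ)) a →
      (fun k : Fin (m.len + 1) => n.len + 1 ≤ (f.toOrderHom k : ℕ) + (j : ℕ)) b := by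
    intro a b hab ha
    have h2 : (f.toOrderHom a : ℕ) ≤ f.toOrderHom b := f.toOrderHom.monotone hab
    omega
  have key := card_filter_upclosed
    (fun k : Fin (m.len + 1) => n.len + 1 ≤ (f.toOrderHom k : ℕ) + (j : ℕ))
    hup ⟨i', hi'⟩
  simp only at key
  have hcard : (FHom f j : ℕ) = (Finset.univ.filter (fun k : Fin (m.len + 1) =>
      n.len + 1 ≤ (f.toOrderHom k : ℕ) + (j : ℕ))).card := rfl
  have hle : (Finset.univ.filter (fun k : Fin (m.len + 1) =>
      n.len + 1 ≤ (f.toOrderHom k : ℕ) + (j : ℕ))).card ≤ m.len + 1 := by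
    have := Finset.card_filter_le (Finset.univ : Finset (Fin (m.len + 1)))
      (fun k => n.len + 1 ≤ (f.toOrderHom k : ℕ) + (j : ℕ))
    simpa using this
  have hval : (f.toOrderHom ⟨i', hi'⟩ : ℕ) < n.len + 1 := (f.toOrderHom _).isLt
  omega

lemma GHom_F_map {m n : SimplexCategory} (f : m ⟶ n)
    (i : ℕ) (hi : i < m.len + 1) (i' : ℕ) (hi' : i' < m.len + 1) (hii' : i + i' = m.len) :
    ((GHom (F.map f.op)) ⟨i, hi⟩ : ℕ) = n.len - (f.toOrderHom ⟨i', hi'⟩ : ℕ) := by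
  show (Finset.univ.filter (fun j : Fin (n.len + 2) =>
      ((FHom f j : Fin (m.len + 2)) : ℕ) ≤ i)).card - 1 = _
  rw [Finset.filter_congr (fun j _ => FHom_le_iff f j i i' hi' hii')]
  rw [count_le]
  have hval : (f.toOrderHom ⟨i', hi'⟩ : ℕ) < n.len + 1 := (f.toOrderHom _).isLt
  omega

lemma F_map_op_inj {m n : SimplexCategory} (f g : m ⟶ n)
    (h : F.map f.op = F.map g.op) : f = g := by
  apply SimplexCategory.Hom.ext
  apply OrderHom.ext
  funext k
  have hk : (k : ℕ) < m.len + 1 := k.isLt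
  have h1 := GHom_F_map f (m.len - (k : ℕ)) (by omega) (k : ℕ) hk (by omega)
  have h2 := GHom_F_map g (m.len - (k : ℕ)) (by omega) (k : ℕ) hk (by omega)
  rw [h] at h1
  have hf : (f.toOrderHom k : ℕ) < n.len + 1 := (f.toOrderHom _).isLt
  have hg : (g.toOrderHom k : ℕ) < n.len + 1 := (g.toOrderHom _).isLt
  have hk' : (⟨(k : ℕ), hk⟩ : Fin (m.len + 1)) = k := rfl
  rw [hk'] at h1 h2
  apply Fin.ext
  omega

instance : F.Faithful where
  map_injective {X Y} φ ψ h := by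
    have := F_map_op_inj φ.unop ψ.unop h
    exact Quiver.Hom.unop_inj this

lemma IntervalCat.eq_of_iso {a b : IntervalCat} (e : a ≅ b) : a = b := by
  have h1 : ∀ x, e.inv.1 (e.hom.1 x) = x := fun x =>
    congrArg (fun u : a ⟶ a => (u.1 x : Fin (a.len + 2))) e.hom_inv_id
  have h2 : ∀ x, e.hom.1 (e.inv.1 x) = x := fun x =>
    congrArg (fun u : b ⟶ b => (u.1 x : Fin (b.len + 2))) e.inv_hom_id
  have hbij : Function.Bijective e.hom.1 :=
    ⟨Function.LeftInverse.injective h1, fun y => ⟨e.inv.1 y, h2 y⟩⟩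
  have hcard := Fintype.card_of_bijective hbij
  simp only [Fintype.card_fin] at hcard
  have hlen : a.len = b.len := by omega
  cases a; cases b
  simp only [IntervalCat.mk.injEq]
  exact hlen

lemma IntervalCat.iso_hom_eq_id {a : IntervalCat} (e : a ≅ a) : e.hom = 𝟙 a := by
  have h1 : ∀ x, e.inv.1 (e.hom.1 x) = x := fun x =>
    congrArg (fun u : a ⟶ a => (u.1 x : Fin (a.len + 2))) e.hom_inv_id
  have h2 : ∀ x, e.hom.1 (e.inv.1 x) = x := fun x =>
    congrArg (fun u : a ⟶ a => (u.1 x : Fin (a.len + 2))) e.inv_hom_id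
  have hinj : Function.Injective e.hom.1 := Function.LeftInverse.injective h1
  have hsm : StrictMono e.hom.1 := e.hom.1.monotone.strictMono_of_injective hinj
  have hsurj : Function.Surjective e.hom.1 := fun y => ⟨e.inv.1 y, h2 y⟩
  have hcoe : (StrictMono.orderIsoOfSurjective _ hsm hsurj : Fin (a.len + 2) → Fin (a.len + 2)) =
      e.hom.1 := StrictMono.coe_orderIsoOfSurjective _ hsm hsurj
  rw [Subsingleton.elim (StrictMono.orderIsoOfSurjective _ hsm hsurj)
    (OrderIso.refl (Fin (a.len + 2)))] at hcoe
  apply Subtype.ext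
  apply OrderHom.ext
  funext x
  exact (congrFun hcoe x).symm

lemma IntervalCat.iso_hom_eq_eqToHom {a b : IntervalCat} (e : a ≅ b) :
    e.hom = eqToHom (IntervalCat.eq_of_iso e) := by
  obtain rfl : a = b := IntervalCat.eq_of_iso e
  rw [eqToHom_refl]
  exact IntervalCat.iso_hom_eq_id e

/-- An endofunctor of the simplex category is determined by the
simplicial interval it induces: if the functors `Δᵒᵖ ⥤ 𝓘` sending `[n]` to
`Hom_Δ(Tᵢ([n]),[1])` (with the pointwise order, morphisms acting by `Tᵢ` followed by
precomposition), i.e. `Tᵢ.op ⋙ F`, are naturally isomorphic, then `T₁ = T₂`. -/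
theorem endofunctor_determined_by_simplicial_interval
    (T₁ T₂ : SimplexCategory ⥤ SimplexCategory)
    (h : Nonempty (T₁.op ⋙ F ≅ T₂.op ⋙ F)) :
    T₁ = T₂ := by
  obtain ⟨α⟩ := h
  have hobj : ∀ X : SimplexCategory, T₁.obj X = T₂.obj X := by
    intro X
    have hl := IntervalCat.eq_of_iso (α.app (Opposite.op X))
    have hlen : (T₁.obj X).len = (T₂.obj X).len := congrArg IntervalCat.len hl
    rw [← SimplexCategory.mk_len (T₁.obj X), ← SimplexCategory.mk_len (T₂.obj X), hlen]
  have hop : ∀ Z : SimplexCategory,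
      Opposite.op (T₁.obj Z) = Opposite.op (T₂.obj Z) := fun Z => congrArg Opposite.op (hobj Z)
  have key : ∀ {X Y : SimplexCategory} (f : X ⟶ Y),
      (T₁.map f).op = eqToHom (hop Y) ≫ (T₂.map f).op ≫ eqToHom (hop X).symm := by
    intro X Y f
    apply F.map_injective
    rw [F.map_comp, F.map_comp, eqToHom_map, eqToHom_map]
    have hnat := α.hom.naturality f.op
    have hX : α.hom.app (Opposite.op X) =
        eqToHom (IntervalCat.eq_of_iso (α.app (Opposite.op X))) :=
      IntervalCat.iso_hom_eq_eqToHom (α.app (Opposite.op X))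
    have hY : α.hom.app (Opposite.op Y) =
        eqToHom (IntervalCat.eq_of_iso (α.app (Opposite.op Y))) :=
      IntervalCat.iso_hom_eq_eqToHom (α.app (Opposite.op Y))
    rw [hX, hY] at hnat
    calc F.map ((T₁.map f).op)
        = (F.map ((T₁.map f).op) ≫
            eqToHom (IntervalCat.eq_of_iso (α.app (Opposite.op X)))) ≫
            eqToHom (IntervalCat.eq_of_iso (α.app (Opposite.op X))).symm := by simp
      _ = (eqToHom (IntervalCat.eq_of_iso (α.app (Opposite.op Y))) ≫
            F.map ((T₂.map f).op)) ≫
            eqToHom (IntervalCat.eq_of_iso (α.app (Opposite.op X))).symm := by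
              rw [show (T₁.op ⋙ F).map f.op = F.map ((T₁.map f).op) from rfl,
                show (T₂.op ⋙ F).map f.op = F.map ((T₂.map f).op) from rfl] at hnat
              rw [hnat]
      _ = eqToHom (congrArg F.obj (hop Y)) ≫ F.map ((T₂.map f).op) ≫
            eqToHom (congrArg F.obj (hop X).symm) := by simp
  refine CategoryTheory.Functor.ext hobj ?_
  intro X Y f
  apply Quiver.Hom.op_inj
  rw [key f]
  simp only [op_comp, eqToHom_op]
  rfl
end GES
end

section
/- For any endofunctors T₁, T₂ of the simplex category Δ, the simplicial set (T₁+T₂)*(Δ¹) is isomorphic to the wedge of T₁*(Δ¹) and T₂*(Δ¹): namely, to the pushout of the two maps Δ⁰ → T₁*(Δ¹) and Δ⁰ → T₂*(Δ¹), where the first picks out the vertex of T₁*(Δ¹) given by the constant map at 0 in Hom_Δ(T₁([0]),[1]) and the second picks out the vertex of T₂*(Δ¹) given by the constant map at 1 in Hom_Δ(T₂([0]),[1]). -/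
open CategoryTheory Simplicial Topology

universe u

namespace GES

def concatMap {n₁ n₂ m₁ m₂ : ℕ} (f : Fin (n₁ + 1) →o Fin (n₂ + 1))
    (g : Fin (m₁ + 1) →o Fin (m₂ + 1)) :
    Fin (n₁ + m₁ + 2) →o Fin (n₂ + m₂ + 2) where
  toFun k :=
    if h : (k : ℕ) ≤ n₁ then
      ⟨(f ⟨(k : ℕ), by omega⟩ : ℕ), by
        have := (f ⟨(k : ℕ), by omega⟩).isLt; omega⟩
    else
      ⟨n₂ + 1 + (g ⟨(k : ℕ) - n₁ - 1, by have := k.isLt; omega⟩ : ℕ), by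
        have := (g ⟨(k : ℕ) - n₁ - 1, by have := k.isLt; omega⟩).isLt; omega⟩
  monotone' := by
    intro a b hab
    have hab' : (a : ℕ) ≤ (b : ℕ) := hab
    dsimp only
    by_cases ha : (a : ℕ) ≤ n₁ <;> by_cases hb : (b : ℕ) ≤ n₁
    · rw [dif_pos ha, dif_pos hb]
      exact Fin.mk_le_mk.mpr (f.monotone (show (⟨(a : ℕ), by omega⟩ : Fin (n₁ + 1)) ≤
        ⟨(b : ℕ), by omega⟩ from Fin.mk_le_mk.mpr hab'))
    · rw [dif_pos ha, dif_neg hb]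
      refine Fin.mk_le_mk.mpr ?_
      have := (f ⟨(a : ℕ), by omega⟩).isLt
      omega
    · omega
    · rw [dif_neg ha, dif_neg hb]
      refine Fin.mk_le_mk.mpr ?_
      have := g.monotone (show (⟨(a : ℕ) - n₁ - 1, by have := a.isLt; omega⟩ : Fin (m₁ + 1)) ≤
        ⟨(b : ℕ) - n₁ - 1, by have := b.isLt; omega⟩ from Fin.mk_le_mk.mpr (by omega))
      omega

theorem concatMap_apply_of_le {n₁ n₂ m₁ m₂ : ℕ} (f : Fin (n₁ + 1) →o Fin (n₂ + 1))
    (g : Fin (m₁ + 1) →o Fin (m₂ + 1)) (k : Fin (n₁ + m₁ + 2)) (h : (k : ℕ) ≤ n₁) :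
    (concatMap f g k : ℕ) = f ⟨(k : ℕ), by omega⟩ := by
  show ((dite _ _ _ : Fin _) : ℕ) = _
  rw [dif_pos h]

theorem concatMap_apply_of_gt {n₁ n₂ m₁ m₂ : ℕ} (f : Fin (n₁ + 1) →o Fin (n₂ + 1))
    (g : Fin (m₁ + 1) →o Fin (m₂ + 1)) (k : Fin (n₁ + m₁ + 2)) (h : ¬ (k : ℕ) ≤ n₁) :
    (concatMap f g k : ℕ) = n₂ + 1 + g ⟨(k : ℕ) - n₁ - 1, by have := k.isLt; omega⟩ := by
  simp only [concatMap]
  exact congrArg Fin.val (dif_neg h)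

theorem concatMap_id {n m : ℕ} :
    concatMap (OrderHom.id (α := Fin (n + 1))) (OrderHom.id (α := Fin (m + 1))) =
      OrderHom.id := by
  ext k
  by_cases h : (k : ℕ) ≤ n
  · rw [concatMap_apply_of_le _ _ _ h]; rfl
  · rw [concatMap_apply_of_gt _ _ _ h]
    have := k.isLt
    show n + 1 + ((k : ℕ) - n - 1) = (k : ℕ)
    omega

theorem concatMap_comp {n₁ n₂ n₃ m₁ m₂ m₃ : ℕ}
    (f₁ : Fin (n₁ + 1) →o Fin (n₂ + 1)) (f₂ : Fin (n₂ + 1) →o Fin (n₃ + 1))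
    (g₁ : Fin (m₁ + 1) →o Fin (m₂ + 1)) (g₂ : Fin (m₂ + 1) →o Fin (m₃ + 1)) :
    concatMap (f₂.comp f₁) (g₂.comp g₁) = (concatMap f₂ g₂).comp (concatMap f₁ g₁) := by
  ext k
  have hk := k.isLt
  show (concatMap (f₂.comp f₁) (g₂.comp g₁) k : ℕ) =
    (concatMap f₂ g₂ (concatMap f₁ g₁ k) : ℕ)
  by_cases h : (k : ℕ) ≤ n₁
  · have e1 := concatMap_apply_of_le (f₂.comp f₁) (g₂.comp g₁) k h
    have e2 := concatMap_apply_of_le f₁ g₁ k h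
    have h2 : ((concatMap f₁ g₁ k) : ℕ) ≤ n₂ := by
      have := (f₁ ⟨(k : ℕ), by omega⟩).isLt; omega
    have e3 := concatMap_apply_of_le f₂ g₂ (concatMap f₁ g₁ k) h2
    simp only [OrderHom.comp_coe, Function.comp_apply] at e1
    have e4 : (f₂ (⟨((concatMap f₁ g₁ k) : ℕ), by omega⟩ : Fin (n₂ + 1)) : ℕ) =
        f₂ (f₁ ⟨(k : ℕ), by omega⟩) := congrArg (Fin.val ∘ f₂) (Fin.ext e2)
    omega
  · have e1 := concatMap_apply_of_gt (f₂.comp f₁) (g₂.comp g₁) k h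
    have e2 := concatMap_apply_of_gt f₁ g₁ k h
    have h2 : ¬ ((concatMap f₁ g₁ k) : ℕ) ≤ n₂ := by omega
    have e3 := concatMap_apply_of_gt f₂ g₂ (concatMap f₁ g₁ k) h2
    simp only [OrderHom.comp_coe, Function.comp_apply] at e1
    have e4 : (g₂ (⟨((concatMap f₁ g₁ k) : ℕ) - n₂ - 1,
          by have := (concatMap f₁ g₁ k).isLt; omega⟩ : Fin (m₂ + 1)) : ℕ) =
        g₂ (g₁ ⟨(k : ℕ) - n₁ - 1, by omega⟩) := congrArg (Fin.val ∘ g₂) (Fin.ext (by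
          show ((concatMap f₁ g₁ k) : ℕ) - n₂ - 1 = _
          omega))
    omega

/-- The sum (concatenation) of two endofunctors of the simplex category. -/
def sumFunctor (T₁ T₂ : SimplexCategory ⥤ SimplexCategory) :
    SimplexCategory ⥤ SimplexCategory where
  obj X := SimplexCategory.mk ((T₁.obj X).len + (T₂.obj X).len + 1)
  map {X Y} f := SimplexCategory.Hom.mk (concatMap (T₁.map f).toOrderHom (T₂.map f).toOrderHom)
  map_id X := by
    apply SimplexCategory.Hom.ext
    simp only [SimplexCategory.Hom.toOrderHom_mk, T₁.map_id, T₂.map_id,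
      SimplexCategory.id_toOrderHom]
    exact concatMap_id
  map_comp {X Y Z} f g := by
    apply SimplexCategory.Hom.ext
    simp only [SimplexCategory.Hom.toOrderHom_mk, T₁.map_comp, T₂.map_comp,
      SimplexCategory.comp_toOrderHom]
    exact concatMap_comp _ _ _ _

/-- The endofunctor `T*` on simplicial sets induced by an endofunctor `T` of the simplex
category: `T*(X) = X ∘ Tᵒᵖ`. -/
def star (T : SimplexCategory ⥤ SimplexCategory) (X : SSet) : SSet := T.op ⋙ X

/-- The vertex of `T*(Δ¹)` given by the constant map at `i ∈ {0,1}` in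
`Hom_Δ(T([0]),[1])`, as a map `Δ[0] ⟶ T*(Δ¹)`. -/
def vertex (T : SimplexCategory ⥤ SimplexCategory) (i : Fin 2) :
    Δ[0] ⟶ star T Δ[1] :=
  (SSet.yonedaEquiv (X := star T Δ[1]) (n := SimplexCategory.mk 0)).symm
    ((SSet.stdSimplex.objEquiv (n := SimplexCategory.mk 1)
        (m := Opposite.op (T.obj (SimplexCategory.mk 0)))).symm
      (SimplexCategory.const (T.obj (SimplexCategory.mk 0)) (SimplexCategory.mk 1) i))

def joinR {n m : ℕ} (f : Fin (n + 1) →o Fin 2) : Fin (n + m + 2) →o Fin 2 where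
  toFun k := if h : (k : ℕ) ≤ n then f ⟨k, by omega⟩ else 1
  monotone' := by
    intro a b hab
    have hab' : (a : ℕ) ≤ (b : ℕ) := hab
    dsimp only
    by_cases ha : (a : ℕ) ≤ n <;> by_cases hb : (b : ℕ) ≤ n
    · rw [dif_pos ha, dif_pos hb]
      exact f.monotone (Fin.mk_le_mk.mpr hab')
    · rw [dif_pos ha, dif_neg hb]
      exact Fin.le_last _ |>.trans (le_refl _)
    · omega
    · rw [dif_neg ha, dif_neg hb]

def joinL {n m : ℕ} (g : Fin (m + 1) →o Fin 2) : Fin (n + m + 2) →o Fin 2 where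
  toFun k := if h : (k : ℕ) ≤ n then 0 else g ⟨(k : ℕ) - n - 1, by have := k.isLt; omega⟩
  monotone' := by
    intro a b hab
    have hab' : (a : ℕ) ≤ (b : ℕ) := hab
    dsimp only
    by_cases ha : (a : ℕ) ≤ n <;> by_cases hb : (b : ℕ) ≤ n
    · rw [dif_pos ha, dif_pos hb]
    · rw [dif_pos ha, dif_neg hb]; exact Fin.zero_le _
    · omega
    · rw [dif_neg ha, dif_neg hb]
      exact g.monotone (Fin.mk_le_mk.mpr (by omega))

theorem joinR_apply_of_le {n m : ℕ} (f : Fin (n + 1) →o Fin 2) (k : Fin (n + m + 2))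
    (h : (k : ℕ) ≤ n) : joinR f k = f ⟨k, by omega⟩ := dif_pos h

theorem joinR_apply_of_gt {n m : ℕ} (f : Fin (n + 1) →o Fin 2) (k : Fin (n + m + 2))
    (h : ¬ (k : ℕ) ≤ n) : joinR f k = 1 := dif_neg h

theorem joinL_apply_of_le {n m : ℕ} (g : Fin (m + 1) →o Fin 2) (k : Fin (n + m + 2))
    (h : (k : ℕ) ≤ n) : joinL g k = 0 := dif_pos h

theorem joinL_apply_of_gt {n m : ℕ} (g : Fin (m + 1) →o Fin 2) (k : Fin (n + m + 2))
    (h : ¬ (k : ℕ) ≤ n) :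
    joinL g k = g ⟨(k : ℕ) - n - 1, by have := k.isLt; omega⟩ := dif_neg h

theorem joinR_comp_concatMap {n₁ n₂ m₁ m₂ : ℕ} (a : Fin (n₁ + 1) →o Fin (n₂ + 1))
    (b : Fin (m₁ + 1) →o Fin (m₂ + 1)) (f : Fin (n₂ + 1) →o Fin 2) :
    (joinR (m := m₂) f).comp (concatMap a b) = joinR (m := m₁) (f.comp a) := by
  ext k
  show ((joinR f) (concatMap a b k) : ℕ) = _
  by_cases h : (k : ℕ) ≤ n₁
  · have e1 := concatMap_apply_of_le a b k h
    have hle : ((concatMap a b k : Fin (n₂ + m₂ + 2)) : ℕ) ≤ n₂ := by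
      have := (a ⟨(k : ℕ), by omega⟩).isLt; omega
    rw [joinR_apply_of_le f _ hle, joinR_apply_of_le (f.comp a) k h]
    exact congrArg (fun z => ((f z : Fin 2) : ℕ)) (Fin.ext e1)
  · have e1 := concatMap_apply_of_gt a b k h
    have hgt : ¬ ((concatMap a b k : Fin (n₂ + m₂ + 2)) : ℕ) ≤ n₂ := by omega
    rw [joinR_apply_of_gt f _ hgt, joinR_apply_of_gt (f.comp a) k h]

theorem joinL_comp_concatMap {n₁ n₂ m₁ m₂ : ℕ} (a : Fin (n₁ + 1) →o Fin (n₂ + 1))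
    (b : Fin (m₁ + 1) →o Fin (m₂ + 1)) (g : Fin (m₂ + 1) →o Fin 2) :
    (joinL (n := n₂) g).comp (concatMap a b) = joinL (n := n₁) (g.comp b) := by
  ext k
  show ((joinL g) (concatMap a b k) : ℕ) = _
  by_cases h : (k : ℕ) ≤ n₁
  · have e1 := concatMap_apply_of_le a b k h
    have hle : ((concatMap a b k : Fin (n₂ + m₂ + 2)) : ℕ) ≤ n₂ := by
      have := (a ⟨(k : ℕ), by omega⟩).isLt; omega
    rw [joinL_apply_of_le g _ hle, joinL_apply_of_le (g.comp b) k h]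
  · have e1 := concatMap_apply_of_gt a b k h
    have hgt : ¬ ((concatMap a b k : Fin (n₂ + m₂ + 2)) : ℕ) ≤ n₂ := by omega
    rw [joinL_apply_of_gt g _ hgt, joinL_apply_of_gt (g.comp b) k h]
    show ((g ⟨((concatMap a b k : Fin (n₂ + m₂ + 2)) : ℕ) - n₂ - 1, _⟩ : Fin 2) : ℕ) =
      ((g (b ⟨(k : ℕ) - n₁ - 1, _⟩) : Fin 2) : ℕ)
    refine congrArg (fun z => ((g z : Fin 2) : ℕ)) (Fin.ext ?_)
    show ((concatMap a b k : Fin (n₂ + m₂ + 2)) : ℕ) - n₂ - 1 = ((b ⟨(k : ℕ) - n₁ - 1, _⟩ : Fin (m₂+1)) : ℕ)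
    omega

def fpart {n m : ℕ} (h : Fin (n + m + 2) →o Fin 2) : Fin (n + 1) →o Fin 2 where
  toFun j := h ⟨j, by omega⟩
  monotone' := fun a b hab => h.monotone (Fin.mk_le_mk.mpr hab)

def gpart {n m : ℕ} (h : Fin (n + m + 2) →o Fin 2) : Fin (m + 1) →o Fin 2 where
  toFun j := h ⟨n + 1 + j, by have := j.isLt; omega⟩
  monotone' := fun a b hab => h.monotone (Fin.mk_le_mk.mpr (by
    have : (a : ℕ) ≤ b := hab; omega))

theorem fpart_joinR {n m : ℕ} (f : Fin (n + 1) →o Fin 2) :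
    fpart (joinR (m := m) f) = f := by
  ext j
  have e := joinR_apply_of_le (m := m) f ⟨(j : ℕ), by have := j.isLt; omega⟩
    (Nat.lt_succ_iff.mp j.isLt)
  exact congrArg Fin.val (e.trans (congrArg f (Fin.ext rfl)))

theorem gpart_joinL {n m : ℕ} (g : Fin (m + 1) →o Fin 2) :
    gpart (joinL (n := n) g) = g := by
  ext j
  have e := joinL_apply_of_gt (n := n) g ⟨n + 1 + (j : ℕ), by have := j.isLt; omega⟩
    (show ¬ n + 1 + (j : ℕ) ≤ n by omega)
  refine congrArg Fin.val (e.trans (congrArg g (Fin.ext ?_)))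
  show n + 1 + (j : ℕ) - n - 1 = (j : ℕ)
  omega

theorem eq_joinL_of_eq_zero {n m : ℕ} (h : Fin (n + m + 2) →o Fin 2)
    (h0 : h ⟨n, by omega⟩ = 0) : h = joinL (gpart h) := by
  ext k
  by_cases hk : (k : ℕ) ≤ n
  · rw [joinL_apply_of_le _ _ hk]
    have := h.monotone (show k ≤ ⟨n, by omega⟩ from Fin.le_def.mpr (by simpa using hk))
    rw [h0] at this
    exact congrArg Fin.val (Fin.le_zero_iff.mp this)
  · rw [joinL_apply_of_gt _ _ hk]
    refine congrArg (fun z => ((h z : Fin 2) : ℕ)) (Fin.ext ?_)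
    show (k : ℕ) = n + 1 + ((k : ℕ) - n - 1)
    omega

theorem eq_joinR_of_ne_zero {n m : ℕ} (h : Fin (n + m + 2) →o Fin 2)
    (h0 : h ⟨n, by omega⟩ ≠ 0) : h = joinR (fpart h) := by
  have h1 : h ⟨n, by omega⟩ = 1 := by omega
  ext k
  by_cases hk : (k : ℕ) ≤ n
  · rw [joinR_apply_of_le _ _ hk]
    rfl
  · rw [joinR_apply_of_gt _ _ hk]
    have := h.monotone (show (⟨n, by omega⟩ : Fin (n + m + 2)) ≤ k from Fin.le_def.mpr (by
      simpa using by omega))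
    rw [h1] at this
    have := Fin.le_antisymm this (Fin.le_last _)
    simp [this]

theorem joinR_zero_eq_joinL_one {n m : ℕ} :
    joinR (m := m) (OrderHom.const (Fin (n + 1)) 0) =
      joinL (n := n) (OrderHom.const (Fin (m + 1)) (1 : Fin 2)) := by
  ext k
  by_cases hk : (k : ℕ) ≤ n
  · rw [joinR_apply_of_le _ _ hk, joinL_apply_of_le _ _ hk]; rfl
  · rw [joinR_apply_of_gt _ _ hk, joinL_apply_of_gt _ _ hk]; rfl

open Opposite in
/-- The inclusion of `T₁*(Δ¹)` into `(T₁+T₂)*(Δ¹)`. -/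
def wedgeIncl₁ (T₁ T₂ : SimplexCategory ⥤ SimplexCategory) :
    star T₁ Δ[1] ⟶ star (sumFunctor T₁ T₂) Δ[1] where
  app m := TypeCat.ofHom fun x => (SSet.stdSimplex.objEquiv).symm
    (SimplexCategory.Hom.mk (joinR (n := (T₁.obj m.unop).len) (m := (T₂.obj m.unop).len)
      ((SSet.stdSimplex.objEquiv x).toOrderHom)))
  naturality m m' α := by
    refine ConcreteCategory.hom_ext _ _ (fun x => ?_)
    exact congrArg (fun q : Fin ((T₁.obj m'.unop).len + (T₂.obj m'.unop).len + 2) →o Fin 2 =>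
      (SSet.stdSimplex.objEquiv (n := ⦋1⦌) (m := (op ((sumFunctor T₁ T₂).obj m'.unop)))).symm
        (SimplexCategory.Hom.mk q))
      (joinR_comp_concatMap (T₁.map α.unop).toOrderHom (T₂.map α.unop).toOrderHom
        ((SSet.stdSimplex.objEquiv x).toOrderHom)).symm

open Opposite in
/-- The inclusion of `T₂*(Δ¹)` into `(T₁+T₂)*(Δ¹)`. -/
def wedgeIncl₂ (T₁ T₂ : SimplexCategory ⥤ SimplexCategory) :
    star T₂ Δ[1] ⟶ star (sumFunctor T₁ T₂) Δ[1] where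
  app m := TypeCat.ofHom fun x => (SSet.stdSimplex.objEquiv).symm
    (SimplexCategory.Hom.mk (joinL (n := (T₁.obj m.unop).len) (m := (T₂.obj m.unop).len)
      ((SSet.stdSimplex.objEquiv x).toOrderHom)))
  naturality m m' α := by
    refine ConcreteCategory.hom_ext _ _ (fun x => ?_)
    exact congrArg (fun q : Fin ((T₁.obj m'.unop).len + (T₂.obj m'.unop).len + 2) →o Fin 2 =>
      (SSet.stdSimplex.objEquiv (n := ⦋1⦌) (m := (op ((sumFunctor T₁ T₂).obj m'.unop)))).symm
        (SimplexCategory.Hom.mk q))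
      (joinL_comp_concatMap (T₁.map α.unop).toOrderHom (T₂.map α.unop).toOrderHom
        ((SSet.stdSimplex.objEquiv x).toOrderHom)).symm

open Opposite in
theorem vertex_app (T : SimplexCategory ⥤ SimplexCategory) (i : Fin 2)
    (m : SimplexCategoryᵒᵖ) (x : Δ[0].obj m) :
    (vertex T i).app m x = (SSet.stdSimplex.objEquiv).symm
      (SimplexCategory.const (T.obj m.unop) ⦋1⦌ i) := rfl

theorem joinR_eq_joinL {n m : ℕ} (f : Fin (n + 1) →o Fin 2) (g : Fin (m + 1) →o Fin 2)
    (hf : ∀ j, f j = 0) (hg : ∀ j, g j = 1) : joinR f = joinL g := by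
  ext k
  by_cases hk : (k : ℕ) ≤ n
  · rw [joinR_apply_of_le _ _ hk, joinL_apply_of_le _ _ hk, hf]
  · rw [joinR_apply_of_gt _ _ hk, joinL_apply_of_gt _ _ hk, hg]

theorem mk_eq_const {X : SimplexCategory} (f : Fin (X.len + 1) →o Fin 2) (i : Fin 2)
    (hf : ∀ j, f j = i) : SimplexCategory.Hom.mk f = SimplexCategory.const X ⦋1⦌ i :=
  SimplexCategory.Hom.ext _ _ (OrderHom.ext _ _ (funext hf))

open Opposite in
theorem wedge_condition (T₁ T₂ : SimplexCategory ⥤ SimplexCategory) :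
    vertex T₁ 0 ≫ wedgeIncl₁ T₁ T₂ = vertex T₂ 1 ≫ wedgeIncl₂ T₁ T₂ := by
  apply NatTrans.ext
  funext m
  refine ConcreteCategory.hom_ext _ _ (fun x => ?_)
  show (wedgeIncl₁ T₁ T₂).app m ((vertex T₁ 0).app m x) =
    (wedgeIncl₂ T₁ T₂).app m ((vertex T₂ 1).app m x)
  rw [vertex_app, vertex_app]
  exact congrArg (fun q => (SSet.stdSimplex.objEquiv (n := ⦋1⦌)
      (m := (op ((sumFunctor T₁ T₂).obj m.unop)))).symm (SimplexCategory.Hom.mk q))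
    (joinR_eq_joinL _ _ (fun j => rfl) (fun j => rfl))

section TypeLevel

open Opposite Limits SimplexCategory

variable (T₁ T₂ : SimplexCategory ⥤ SimplexCategory) (k : SimplexCategoryᵒᵖ)

/-- Abbreviation for the order hom underlying a simplex of `(T₁+T₂)*(Δ¹)`. -/
def uhom (x : (star (sumFunctor T₁ T₂) Δ[1]).obj k) :
    Fin ((T₁.obj k.unop).len + (T₂.obj k.unop).len + 2) →o Fin 2 :=
  ((SSet.stdSimplex.objEquiv (n := ⦋1⦌) (m := (op ((sumFunctor T₁ T₂).obj k.unop)))) x).toOrderHom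

theorem uhom_wedgeIncl₁ (y : (star T₁ Δ[1]).obj k) :
    uhom T₁ T₂ k ((wedgeIncl₁ T₁ T₂).app k y) =
      joinR ((SSet.stdSimplex.objEquiv (n := ⦋1⦌) (m := (op (T₁.obj k.unop)))) y).toOrderHom := rfl

theorem uhom_wedgeIncl₂ (y : (star T₂ Δ[1]).obj k) :
    uhom T₁ T₂ k ((wedgeIncl₂ T₁ T₂).app k y) =
      joinL ((SSet.stdSimplex.objEquiv (n := ⦋1⦌) (m := (op (T₂.obj k.unop)))) y).toOrderHom := rfl

theorem eq_of_uhom_eq {x x' : (star (sumFunctor T₁ T₂) Δ[1]).obj k}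
    (e : uhom T₁ T₂ k x = uhom T₁ T₂ k x') : x = x' := by
  apply (SSet.stdSimplex.objEquiv (n := ⦋1⦌) (m := (op ((sumFunctor T₁ T₂).obj k.unop)))).injective
  exact SimplexCategory.Hom.ext _ _ e

/-- The descent map for the pushout cocone at level `k`. -/
noncomputable def descFun (s : PushoutCocone ((vertex T₁ 0).app k) ((vertex T₂ 1).app k)) :
    (star (sumFunctor T₁ T₂) Δ[1]).obj k → s.pt := fun x =>
  if _ : (uhom T₁ T₂ k x) ⟨(T₁.obj k.unop).len, by omega⟩ = 0 then
    s.inr ((SSet.stdSimplex.objEquiv (n := ⦋1⦌) (m := (op (T₂.obj k.unop)))).symm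
      (SimplexCategory.Hom.mk (gpart (uhom T₁ T₂ k x))))
  else
    s.inl ((SSet.stdSimplex.objEquiv (n := ⦋1⦌) (m := (op (T₁.obj k.unop)))).symm
      (SimplexCategory.Hom.mk (fpart (uhom T₁ T₂ k x))))

end TypeLevel

section TypeLevel2

open Opposite Limits SimplexCategory

variable (T₁ T₂ : SimplexCategory ⥤ SimplexCategory) (k : SimplexCategoryᵒᵖ)

theorem s_cond (s : PushoutCocone ((vertex T₁ 0).app k) ((vertex T₂ 1).app k)) :
    s.inl ((SSet.stdSimplex.objEquiv (n := ⦋1⦌) (m := (op (T₁.obj k.unop)))).symm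
        (SimplexCategory.const (T₁.obj k.unop) ⦋1⦌ 0)) =
      s.inr ((SSet.stdSimplex.objEquiv (n := ⦋1⦌) (m := (op (T₂.obj k.unop)))).symm
        (SimplexCategory.const (T₂.obj k.unop) ⦋1⦌ 1)) :=
  ConcreteCategory.congr_hom s.condition
    ((SSet.stdSimplex.objEquiv (n := ⦋0⦌) (m := k)).symm (SimplexCategory.const k.unop ⦋0⦌ 0))

theorem descFun_incl₁ (s : PushoutCocone ((vertex T₁ 0).app k) ((vertex T₂ 1).app k))
    (y : (star T₁ Δ[1]).obj k) :
    descFun T₁ T₂ k s ((wedgeIncl₁ T₁ T₂).app k y) = s.inl y := by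
  set f := ((SSet.stdSimplex.objEquiv (n := ⦋1⦌) (m := (op (T₁.obj k.unop)))) y).toOrderHom with hfdef
  have hval : ∀ (p : (T₁.obj k.unop).len < (T₁.obj k.unop).len + (T₂.obj k.unop).len + 2),
      (uhom T₁ T₂ k ((wedgeIncl₁ T₁ T₂).app k y)) ⟨(T₁.obj k.unop).len, p⟩ =
        f ⟨(T₁.obj k.unop).len, Nat.lt_succ_self _⟩ := by
    intro p
    rw [uhom_wedgeIncl₁]
    exact (joinR_apply_of_le _ _ (le_refl _)).trans (congrArg _ (Fin.ext rfl))
  unfold descFun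
  by_cases h0 : f ⟨(T₁.obj k.unop).len, Nat.lt_succ_self _⟩ = 0
  · rw [dif_pos ((hval _).trans h0)]
    have hfz : ∀ j, f j = 0 := by
      intro j
      refine Fin.le_zero_iff.mp ?_
      rw [← h0]
      exact f.monotone (Fin.le_def.mpr (by simpa using Nat.lt_succ_iff.mp j.isLt))
    have hg1 : ∀ j, gpart (uhom T₁ T₂ k ((wedgeIncl₁ T₁ T₂).app k y)) j = 1 := by
      intro j
      rw [uhom_wedgeIncl₁]
      exact joinR_apply_of_gt (n := (T₁.obj k.unop).len) (m := (T₂.obj k.unop).len) f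
        ⟨(T₁.obj k.unop).len + 1 + (j : ℕ), by have := j.isLt; omega⟩
        (show ¬ (T₁.obj k.unop).len + 1 + (j : ℕ) ≤ (T₁.obj k.unop).len by omega)
    have e2 : (SimplexCategory.Hom.mk (gpart (uhom T₁ T₂ k ((wedgeIncl₁ T₁ T₂).app k y)))) =
        SimplexCategory.const (T₂.obj k.unop) ⦋1⦌ 1 := mk_eq_const _ _ hg1
    have e3 : y = (SSet.stdSimplex.objEquiv (n := ⦋1⦌) (m := (op (T₁.obj k.unop)))).symm
        (SimplexCategory.const (T₁.obj k.unop) ⦋1⦌ 0) := by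
      apply (SSet.stdSimplex.objEquiv (n := ⦋1⦌) (m := (op (T₁.obj k.unop)))).injective
      rw [Equiv.apply_symm_apply]
      exact SimplexCategory.Hom.ext _ _ (OrderHom.ext _ _ (funext hfz))
    rw [e2, e3]
    exact (s_cond T₁ T₂ k s).symm
  · rw [dif_neg (fun hc => h0 ((hval _).symm.trans hc))]
    refine congrArg s.inl ?_
    have e4 : fpart (uhom T₁ T₂ k ((wedgeIncl₁ T₁ T₂).app k y)) = f := by
      rw [uhom_wedgeIncl₁]; exact fpart_joinR f
    rw [e4, hfdef]; rfl

theorem descFun_incl₂ (s : PushoutCocone ((vertex T₁ 0).app k) ((vertex T₂ 1).app k))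
    (y : (star T₂ Δ[1]).obj k) :
    descFun T₁ T₂ k s ((wedgeIncl₂ T₁ T₂).app k y) = s.inr y := by
  set g := ((SSet.stdSimplex.objEquiv (n := ⦋1⦌) (m := (op (T₂.obj k.unop)))) y).toOrderHom with hgdef
  have hval : ∀ (p : (T₁.obj k.unop).len < (T₁.obj k.unop).len + (T₂.obj k.unop).len + 2),
      (uhom T₁ T₂ k ((wedgeIncl₂ T₁ T₂).app k y)) ⟨(T₁.obj k.unop).len, p⟩ = 0 := by
    intro p
    rw [uhom_wedgeIncl₂]
    exact joinL_apply_of_le g _ (le_refl _)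
  unfold descFun
  rw [dif_pos (hval _)]
  refine congrArg s.inr ?_
  have e4 : gpart (uhom T₁ T₂ k ((wedgeIncl₂ T₁ T₂).app k y)) = g := by
    rw [uhom_wedgeIncl₂]; exact gpart_joinL g
  rw [e4, hgdef]; rfl

end TypeLevel2

section TypeLevel3

open Opposite Limits SimplexCategory

variable (T₁ T₂ : SimplexCategory ⥤ SimplexCategory) (k : SimplexCategoryᵒᵖ)

theorem descFun_uniq (s : PushoutCocone ((vertex T₁ 0).app k) ((vertex T₂ 1).app k))
    (m' : (star (sumFunctor T₁ T₂) Δ[1]).obj k → s.pt)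
    (h1 : ∀ y, m' ((wedgeIncl₁ T₁ T₂).app k y) = s.inl y)
    (h2 : ∀ y, m' ((wedgeIncl₂ T₁ T₂).app k y) = s.inr y)
    (x : (star (sumFunctor T₁ T₂) Δ[1]).obj k) : m' x = descFun T₁ T₂ k s x := by
  by_cases h0 : (uhom T₁ T₂ k x) ⟨(T₁.obj k.unop).len, by omega⟩ = 0
  · have hx : x = (wedgeIncl₂ T₁ T₂).app k
        ((SSet.stdSimplex.objEquiv (n := ⦋1⦌) (m := (op (T₂.obj k.unop)))).symm
          (SimplexCategory.Hom.mk (gpart (uhom T₁ T₂ k x)))) := by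
      apply eq_of_uhom_eq
      exact (eq_joinL_of_eq_zero _ h0).trans (uhom_wedgeIncl₂ T₁ T₂ k _).symm
    rw [hx]
    exact (h2 _).trans (descFun_incl₂ T₁ T₂ k s _).symm
  · have hx : x = (wedgeIncl₁ T₁ T₂).app k
        ((SSet.stdSimplex.objEquiv (n := ⦋1⦌) (m := (op (T₁.obj k.unop)))).symm
          (SimplexCategory.Hom.mk (fpart (uhom T₁ T₂ k x)))) := by
      apply eq_of_uhom_eq
      exact (eq_joinR_of_ne_zero _ h0).trans (uhom_wedgeIncl₁ T₁ T₂ k _).symm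
    rw [hx]
    exact (h1 _).trans (descFun_incl₁ T₁ T₂ k s _).symm

/-- The wedge cocone on `(T₁+T₂)*(Δ¹)` is a colimit (pointwise). -/
noncomputable def wedgeTypeIsColimit :
    IsColimit (PushoutCocone.mk ((wedgeIncl₁ T₁ T₂).app k) ((wedgeIncl₂ T₁ T₂).app k)
      (by rw [← NatTrans.comp_app, ← NatTrans.comp_app, wedge_condition]) :
      PushoutCocone ((vertex T₁ 0).app k) ((vertex T₂ 1).app k)) :=
  PushoutCocone.IsColimit.mk _ (fun s => TypeCat.ofHom (descFun T₁ T₂ k s))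
    (fun s => ConcreteCategory.hom_ext _ _ (descFun_incl₁ T₁ T₂ k s))
    (fun s => ConcreteCategory.hom_ext _ _ (descFun_incl₂ T₁ T₂ k s))
    (fun s m' w1 w2 => ConcreteCategory.hom_ext _ _ (descFun_uniq T₁ T₂ k s (fun x => m' x)
      (fun y => ConcreteCategory.congr_hom w1 y) (fun y => ConcreteCategory.congr_hom w2 y)))

end TypeLevel3

/-- The wedge cocone is a colimit in `SSet`. -/
noncomputable def wedgeIsColimit (T₁ T₂ : SimplexCategory ⥤ SimplexCategory) :
    Limits.IsColimit (Limits.PushoutCocone.mk (wedgeIncl₁ T₁ T₂) (wedgeIncl₂ T₁ T₂)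
      (wedge_condition T₁ T₂)) :=
  Limits.evaluationJointlyReflectsColimits _ (fun k =>
    (Limits.isColimitMapCoconePushoutCoconeEquiv
        ((CategoryTheory.evaluation SimplexCategoryᵒᵖ (Type _)).obj k)
        (wedge_condition T₁ T₂)).symm
      (wedgeTypeIsColimit T₁ T₂ k))
/-- For endofunctors `T₁, T₂` of the simplex category, the simplicial
set `(T₁+T₂)*(Δ¹)` is isomorphic to the wedge of `T₁*(Δ¹)` and `T₂*(Δ¹)`: the pushout
of the map `Δ⁰ → T₁*(Δ¹)` picking out the vertex given by the constant map at `0` in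
`Hom_Δ(T₁([0]),[1])` and the map `Δ⁰ → T₂*(Δ¹)` picking out the vertex given by the
constant map at `1` in `Hom_Δ(T₂([0]),[1])`. -/
theorem star_sumFunctor_iso_wedge (T₁ T₂ : SimplexCategory ⥤ SimplexCategory) :
    Nonempty (star.{u} (sumFunctor T₁ T₂) Δ[1] ≅
      Limits.pushout (vertex T₁ 0) (vertex T₂ 1)) := by
  exact ⟨Limits.IsColimit.coconePointUniqueUpToIso (wedgeIsColimit T₁ T₂)
    (Limits.colimit.isColimit (Limits.span (vertex T₁ 0) (vertex T₂ 1)))⟩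
end GES
end

section
/- Let T be an endofunctor of the simplex category Δ that is not a constant functor (equivalently, T is not constant on objects: there exist k, l with T([k]) ≠ T([l])). Then for every k ≥ 0, writing T([k]) = [T(k)], one has k ≤ T(k); that is, the number of elements of T([k]) is at least k + 1. -/
open CategoryTheory Simplicial Topology

namespace GES

open SimplexCategory

/-- Order-theoretic key lemma: if `u, w : X ⟶ Y` and `R0, R1 : Y ⟶ X` in the simplex
category satisfy `u ≫ R0 = 𝟙`, `w ≫ R1 = 𝟙`, `u ≫ R1 = φ` and `w ≫ R0 = φ`, then
`φ = 𝟙`. -/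
lemma phi_eq_id {X Y : SimplexCategory} (u w : X ⟶ Y) (R0 R1 : Y ⟶ X) (φ : X ⟶ X)
    (h0 : u ≫ R0 = 𝟙 X) (h1 : w ≫ R1 = 𝟙 X) (h2 : u ≫ R1 = φ) (h3 : w ≫ R0 = φ) :
    φ = 𝟙 X := by
  ext x : 3
  have e0 : R0.toOrderHom (u.toOrderHom x) = x := by
    simpa using congrArg (fun f => Hom.toOrderHom f x) h0
  have e1 : R1.toOrderHom (w.toOrderHom x) = x := by
    simpa using congrArg (fun f => Hom.toOrderHom f x) h1
  have e2 : R1.toOrderHom (u.toOrderHom x) = φ.toOrderHom x := by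
    simpa using congrArg (fun f => Hom.toOrderHom f x) h2
  have e3 : R0.toOrderHom (w.toOrderHom x) = φ.toOrderHom x := by
    simpa using congrArg (fun f => Hom.toOrderHom f x) h3
  show φ.toOrderHom x = x
  rcases lt_trichotomy (φ.toOrderHom x) x with h | h | h
  · exfalso
    have huw : u.toOrderHom x < w.toOrderHom x :=
      R1.toOrderHom.monotone.reflect_lt (by rw [e1, e2]; exact h)
    have hwu : w.toOrderHom x < u.toOrderHom x :=
      R0.toOrderHom.monotone.reflect_lt (by rw [e0, e3]; exact h)
    exact lt_asymm huw hwu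
  · exact h
  · exfalso
    have hwu : w.toOrderHom x < u.toOrderHom x :=
      R1.toOrderHom.monotone.reflect_lt (by rw [e1, e2]; exact h)
    have huw : u.toOrderHom x < w.toOrderHom x :=
      R0.toOrderHom.monotone.reflect_lt (by rw [e0, e3]; exact h)
    exact lt_asymm huw hwu

lemma eq_of_consec {α : Sort*} {n : ℕ} (f : Fin (n + 1) → α)
    (h : ∀ i : Fin n, f i.castSucc = f i.succ) : ∀ i j, f i = f j := by
  suffices h0 : ∀ i, f i = f 0 by intro i j; rw [h0 i, h0 j]
  intro i
  induction i using Fin.induction with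
  | zero => rfl
  | succ i ih => rw [← h i]; exact ih

/-- The main induction step: if all `T.map (δ i) : T[m] ⟶ T[m+1]` agree, then
`T[m+1] = T[m]` and all `T.map (δ i) : T[m+1] ⟶ T[m+2]` agree. -/
lemma step (T : SimplexCategory ⥤ SimplexCategory) (m : ℕ)
    (hA : ∀ i j : Fin (m + 2), T.map (δ i) = T.map (δ j)) :
    T.obj (mk (m + 1)) = T.obj (mk m) ∧
      ∀ i j : Fin (m + 3), T.map (δ i) = T.map (δ j) := by
  -- relations in the simplex category
  have r0 : δ (0 : Fin (m + 3)) ≫ σ (0 : Fin (m + 2)) = 𝟙 (mk (m + 1)) :=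
    δ_comp_σ_self' (by simp)
  have r1 : δ (2 : Fin (m + 3)) ≫ σ (1 : Fin (m + 2)) = 𝟙 (mk (m + 1)) :=
    δ_comp_σ_succ' (by rw [Fin.succ_one_eq_two])
  have r2 : δ (0 : Fin (m + 3)) ≫ σ (1 : Fin (m + 2)) =
      σ (0 : Fin (m + 1)) ≫ δ (0 : Fin (m + 2)) := by
    have h := δ_comp_σ_of_le (n := m) (i := (0 : Fin (m + 2))) (j := (0 : Fin (m + 1)))
      (by simp)
    rw [Fin.castSucc_zero, Fin.succ_zero_eq_one] at h
    exact h
  have r3 : δ (2 : Fin (m + 3)) ≫ σ (0 : Fin (m + 2)) =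
      σ (0 : Fin (m + 1)) ≫ δ (1 : Fin (m + 2)) := by
    have h := δ_comp_σ_of_gt (n := m) (i := (1 : Fin (m + 2))) (j := (0 : Fin (m + 1)))
      (by simp [Fin.lt_iff_val_lt_val])
    rw [Fin.succ_one_eq_two, Fin.castSucc_zero] at h
    exact h
  have rlow : δ (0 : Fin (m + 2)) ≫ σ (0 : Fin (m + 1)) = 𝟙 (mk m) :=
    δ_comp_σ_self' (by simp)
  -- apply the key lemma
  have hφ : T.map (σ (0 : Fin (m + 1))) ≫ T.map (δ (0 : Fin (m + 2))) =
      𝟙 (T.obj (mk (m + 1))) := by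
    apply phi_eq_id (T.map (δ (0 : Fin (m + 3)))) (T.map (δ (2 : Fin (m + 3))))
      (T.map (σ (0 : Fin (m + 2)))) (T.map (σ (1 : Fin (m + 2))))
    · rw [← T.map_comp, r0, T.map_id]
    · rw [← T.map_comp, r1, T.map_id]
    · rw [← T.map_comp, r2, T.map_comp]
    · rw [← T.map_comp, r3, T.map_comp, hA 1 0]
  have hds : T.map (δ (0 : Fin (m + 2))) ≫ T.map (σ (0 : Fin (m + 1))) =
      𝟙 (T.obj (mk m)) := by
    rw [← T.map_comp, rlow, T.map_id]
  constructor
  · exact (SimplexCategory.skeletal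
      ⟨Iso.mk (T.map (δ (0 : Fin (m + 2)))) (T.map (σ (0 : Fin (m + 1)))) hds hφ⟩).symm
  · -- all next-level cofaces agree
    have hiso : IsIso (T.map (δ (0 : Fin (m + 2)))) :=
      ⟨T.map (σ (0 : Fin (m + 1))), hds, hφ⟩
    apply eq_of_consec
    intro i
    have hrel : δ i ≫ δ i.castSucc = δ i ≫ δ i.succ := δ_comp_δ_self
    have h := congrArg T.map hrel
    rw [T.map_comp, T.map_comp, hA i 0] at h
    exact (cancel_epi (T.map (δ (0 : Fin (m + 2))))).mp h

lemma obj_constant (T : SimplexCategory ⥤ SimplexCategory)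
    (hδeq : T.map (δ (0 : Fin 2)) = T.map (δ (1 : Fin 2))) :
    ∀ X Y : SimplexCategory, T.obj X = T.obj Y := by
  have hA : ∀ m : ℕ, ∀ i j : Fin (m + 2), T.map (δ i) = T.map (δ j) := by
    intro m
    induction m with
    | zero =>
      intro i j
      fin_cases i <;> fin_cases j <;> simp [hδeq]
    | succ m ih => exact (step T m ih).2
  have hobj : ∀ n : ℕ, T.obj (mk n) = T.obj (mk 0) := by
    intro n
    induction n with
    | zero => rfl
    | succ n ih => rw [(step T n (hA n)).1, ih]
  intro X Y
  rw [← mk_len X, ← mk_len Y, hobj X.len, hobj Y.len]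

/-- If an endofunctor `T` of the simplex category is not constant on
objects, then for every `k` one has `k ≤ T(k)`, where `T([k]) = [T(k)]`; that is,
`T([k])` has at least `k + 1` elements. -/
theorem le_len_obj_of_not_constant (T : SimplexCategory ⥤ SimplexCategory)
    (hT : ∃ X Y : SimplexCategory, T.obj X ≠ T.obj Y) :
    ∀ k : ℕ, k ≤ (T.obj (SimplexCategory.mk k)).len := by
  intro k
  -- the two cofaces `[0] ⟶ [1]` have distinct images under `T`
  have hδne : T.map (δ (0 : Fin 2)) ≠ T.map (δ (1 : Fin 2)) := by
    intro h
    obtain ⟨X, Y, hXY⟩ := hT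
    exact hXY (obj_constant T h X Y)
  obtain ⟨e, he⟩ : ∃ e, (T.map (δ (0 : Fin 2))).toOrderHom e ≠
      (T.map (δ (1 : Fin 2))).toOrderHom e := by
    by_contra h
    push_neg at h
    exact hδne (SimplexCategory.Hom.ext _ _ (OrderHom.ext _ _ (funext h)))
  set x : Fin ((T.obj (mk 1)).len + 1) := (T.map (δ (1 : Fin 2))).toOrderHom e with hx
  set y : Fin ((T.obj (mk 1)).len + 1) := (T.map (δ (0 : Fin 2))).toOrderHom e with hy
  -- the sequence of images of the vertices of `[k]`
  set α : Fin (k + 1) → Fin ((T.obj (mk k)).len + 1) :=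
    fun v => (T.map (SimplexCategory.const (mk 0) (mk k) v)).toOrderHom e with hα
  have edge1 : ∀ i : Fin k,
      SimplexCategory.const (mk 0) (mk k) i.castSucc = δ (1 : Fin 2) ≫ mkOfSucc i := by
    intro i
    ext z : 3
    fin_cases z
    rfl
  have edge0 : ∀ i : Fin k,
      SimplexCategory.const (mk 0) (mk k) i.succ = δ (0 : Fin 2) ≫ mkOfSucc i := by
    intro i
    ext z : 3
    fin_cases z
    rfl
  have hcs : ∀ i : Fin k, α i.castSucc = (T.map (mkOfSucc i)).toOrderHom x := by
    intro i
    show (T.map (SimplexCategory.const (mk 0) (mk k) i.castSucc)).toOrderHom e = _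
    rw [edge1 i, T.map_comp]
    rfl
  have hsucc : ∀ i : Fin k, α i.succ = (T.map (mkOfSucc i)).toOrderHom y := by
    intro i
    show (T.map (SimplexCategory.const (mk 0) (mk k) i.succ)).toOrderHom e = _
    rw [edge0 i, T.map_comp]
    rfl
  -- `T.map (mkOfSucc i)` is (split) mono, hence strictly monotone
  have hsm : ∀ i : Fin k, StrictMono (T.map (mkOfSucc i)).toOrderHom := by
    intro i
    have hmono : Monotone
        (fun j : Fin (k + 1) => if (j : ℕ) ≤ (i : ℕ) then (0 : Fin 2) else 1) := by
      intro a b hab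
      have hab' : (a : ℕ) ≤ (b : ℕ) := hab
      dsimp only
      split_ifs with h1 h2 h2
      · exact le_rfl
      · exact Fin.zero_le _
      · exact absurd (hab'.trans h2) h1
      · exact le_rfl
    set r : mk k ⟶ mk 1 := mkHom ⟨_, hmono⟩ with hr
    have v0 : (mkOfSucc i).toOrderHom (0 : Fin 2) = i.castSucc := rfl
    have v1 : (mkOfSucc i).toOrderHom (1 : Fin 2) = i.succ := rfl
    have w0 : r.toOrderHom i.castSucc = 0 := by
      show (if ((i.castSucc : Fin (k + 1)) : ℕ) ≤ (i : ℕ) then (0 : Fin 2) else 1) = 0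
      simp
    have w1 : r.toOrderHom i.succ = 1 := by
      show (if ((i.succ : Fin (k + 1)) : ℕ) ≤ (i : ℕ) then (0 : Fin 2) else 1) = 1
      simp
    have hretr : mkOfSucc i ≫ r = 𝟙 (mk 1) := by
      ext z : 3
      simp only [comp_toOrderHom, OrderHom.comp_coe, Function.comp_apply,
        id_toOrderHom, OrderHom.id_coe, id_eq]
      fin_cases z
      · show r.toOrderHom ((mkOfSucc i).toOrderHom 0) = 0
        rw [v0, w0]
      · show r.toOrderHom ((mkOfSucc i).toOrderHom 1) = 1
        rw [v1, w1]
    have hid : T.map (mkOfSucc i) ≫ T.map r = 𝟙 _ := by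
      rw [← T.map_comp, hretr, T.map_id]
    have hinj : Function.Injective (T.map (mkOfSucc i)).toOrderHom := by
      intro a b hab
      have ha := congrArg (fun f => Hom.toOrderHom f a) hid
      have hb := congrArg (fun f => Hom.toOrderHom f b) hid
      simp only [comp_toOrderHom, OrderHom.comp_coe, Function.comp_apply,
        id_toOrderHom, OrderHom.id_coe, id_eq] at ha hb
      rw [hab] at ha
      exact ha.symm.trans hb
    exact (T.map (mkOfSucc i)).toOrderHom.monotone.strictMono_of_injective hinj
  have hinj : Function.Injective α := by
    rcases lt_or_gt_of_ne he with h | h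
    · -- y < x : α is strictly antitone
      have hsa : StrictAnti α := by
        rw [Fin.strictAnti_iff_succ_lt]
        intro i
        rw [hcs i, hsucc i]
        exact hsm i h
      exact hsa.injective
    · -- x < y : α is strictly monotone
      have hsmα : StrictMono α := by
        rw [Fin.strictMono_iff_lt_succ]
        intro i
        rw [hcs i, hsucc i]
        exact hsm i h
      exact hsmα.injective
  have hcard := Fintype.card_le_of_injective α hinj
  simpa using hcard
end GES
end

section
/- For every endofunctor T of the simplex category Δ and every k ≥ 2, the simplicial set T*(Δ¹) has no non-degenerate k-simplices: every element of T*(Δ¹)_k = Hom_Δ(T([k]),[1]) is in the image of some degeneracy map T*(Δ¹)_{k−1} → T*(Δ¹)_k. -/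
open CategoryTheory Simplicial Topology

namespace GES

section Aux

open SimplexCategory

def mu (m k : ℕ) : (⦋m+2⦌ : SimplexCategory) ⟶ ⦋m+4⦌ :=
  SimplexCategory.mkHom
    ⟨fun j => ⟨if j.1 = 0 then 0 else if j.1 = 1 then min k 3 else j.1 + 2, by
        have := j.isLt; split_ifs <;> omega⟩,
     by
      intro c d hcd
      have hcd' : c.1 ≤ d.1 := hcd
      simp only [Fin.mk_le_mk]
      split_ifs <;> omega⟩

def sg (m p q : ℕ) : (⦋m+4⦌ : SimplexCategory) ⟶ ⦋m+2⦌ :=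
  SimplexCategory.mkHom
    ⟨fun j => ⟨if j.1 < min (max p 1) 3 then 0
        else if j.1 < min (max p 1) 3 + min (max q 1) (4 - min (max p 1) 3) then 1
        else if j.1 < 5 then 2 else j.1 - 2, by
        have := j.isLt; split_ifs <;> omega⟩,
     by
      intro c d hcd
      have hcd' : c.1 ≤ d.1 := hcd
      simp only [Fin.mk_le_mk]
      split_ifs <;> omega⟩

lemma comp_val (m k p q : ℕ) (j : Fin (m + 3)) :
    (((mu m k ≫ sg m p q).toOrderHom j).1 : ℕ) =
      (if (if j.1 = 0 then 0 else if j.1 = 1 then min k 3 else j.1 + 2) < min (max p 1) 3 then 0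
        else if (if j.1 = 0 then 0 else if j.1 = 1 then min k 3 else j.1 + 2) <
            min (max p 1) 3 + min (max q 1) (4 - min (max p 1) 3) then 1
        else if (if j.1 = 0 then 0 else if j.1 = 1 then min k 3 else j.1 + 2) < 5 then 2
        else (if j.1 = 0 then 0 else if j.1 = 1 then min k 3 else j.1 + 2) - 2) := rfl

lemma mu_sg_id (m k p q : ℕ) (hk3 : k ≤ 3) (hp : 1 ≤ p) (hq : 1 ≤ q) (hpq : p + q ≤ 4)
    (h1 : p ≤ k) (h2 : k < p + q) : mu m k ≫ sg m p q = 𝟙 (SimplexCategory.mk (m+2)) := by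
  ext j : 3
  have hj := j.isLt
  simp only [len_mk] at hj
  apply Fin.ext
  rw [id_toOrderHom, OrderHom.id_coe, id_eq, comp_val m k p q j]
  split_ifs <;> omega

lemma comp_val0 (m k p q : ℕ) :
    (((mu m k ≫ sg m p q).toOrderHom (⟨0, by omega⟩ : Fin (m+3))).1 : ℕ) =
      (if (0:ℕ) < min (max p 1) 3 then 0
        else if (0:ℕ) < min (max p 1) 3 + min (max q 1) (4 - min (max p 1) 3) then 1
        else if (0:ℕ) < 5 then 2 else 0 - 2) := rfl

lemma comp_val1 (m k p q : ℕ) :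
    (((mu m k ≫ sg m p q).toOrderHom (⟨1, by omega⟩ : Fin (m+3))).1 : ℕ) =
      (if min k 3 < min (max p 1) 3 then 0
        else if min k 3 < min (max p 1) 3 + min (max q 1) (4 - min (max p 1) 3) then 1
        else if min k 3 < 5 then 2 else min k 3 - 2) := rfl

lemma comp_val2 (m k p q : ℕ) :
    (((mu m k ≫ sg m p q).toOrderHom (⟨2, by omega⟩ : Fin (m+3))).1 : ℕ) =
      (if (4:ℕ) < min (max p 1) 3 then 0
        else if (4:ℕ) < min (max p 1) 3 + min (max q 1) (4 - min (max p 1) 3) then 1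
        else if (4:ℕ) < 5 then 2 else 4 - 2) := rfl

lemma mu_sg_noninj (m k p q : ℕ) (hk1 : 1 ≤ k) (hk3 : k ≤ 3) (hp : 1 ≤ p) (hq : 1 ≤ q)
    (hpq : p + q ≤ 4) (h : k < p ∨ p + q ≤ k) :
    ¬ Function.Injective (mu m k ≫ sg m p q).toOrderHom := by
  intro hinj
  rcases h with h | h
  · have h01 : (mu m k ≫ sg m p q).toOrderHom (⟨0, by omega⟩ : Fin (m+3)) =
        (mu m k ≫ sg m p q).toOrderHom (⟨1, by omega⟩ : Fin (m+3)) := by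
      apply Fin.ext
      rw [comp_val0, comp_val1]
      split_ifs <;> omega
    have := hinj h01
    simp only [Fin.mk.injEq] at this
    omega
  · have h12 : (mu m k ≫ sg m p q).toOrderHom (⟨1, by omega⟩ : Fin (m+3)) =
        (mu m k ≫ sg m p q).toOrderHom (⟨2, by omega⟩ : Fin (m+3)) := by
      apply Fin.ext
      rw [comp_val1, comp_val2]
      split_ifs <;> omega
    have := hinj h12
    simp only [Fin.mk.injEq] at this
    omega

lemma key (T : SimplexCategory ⥤ SimplexCategory) (m : ℕ)
    (φ : T.obj ⦋m+2⦌ ⟶ (⦋1⦌ : SimplexCategory)) :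
    ∃ (i : Fin (m+2)) (w : T.obj ⦋m+1⦌ ⟶ (⦋1⦌ : SimplexCategory)),
      φ = T.map (σ i) ≫ w := by
  by_contra hcon
  push_neg at hcon
  -- φ is not constant
  have hnc : ∃ j, φ.toOrderHom j ≠ φ.toOrderHom 0 := by
    by_contra hc
    push_neg at hc
    refine hcon 0 (T.map (δ 0) ≫ φ) ?_
    rw [← Category.assoc, ← T.map_comp]
    ext j : 3
    simp only [comp_toOrderHom, OrderHom.comp_coe, Function.comp_apply]
    exact (hc _).trans (hc _).symm
  obtain ⟨j1, hj1⟩ := hnc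
  have hval : ∀ j, (φ.toOrderHom j).1 < 2 := by
    intro j
    have := (φ.toOrderHom j).isLt
    simpa only [len_mk] using this
  have hmono := φ.toOrderHom.monotone
  have h0 : (φ.toOrderHom 0).1 = 0 := by
    have h01 : (φ.toOrderHom 0).1 ≤ (φ.toOrderHom j1).1 := hmono (Fin.zero_le _)
    have := hval 0; have := hval j1
    have hne : (φ.toOrderHom j1).1 ≠ (φ.toOrderHom 0).1 := fun hh => hj1 (Fin.ext hh)
    omega
  have h1 : (φ.toOrderHom j1).1 = 1 := by
    have h01 : (φ.toOrderHom 0).1 ≤ (φ.toOrderHom j1).1 := hmono (Fin.zero_le _)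
    have := hval 0; have := hval j1
    have hne : (φ.toOrderHom j1).1 ≠ (φ.toOrderHom 0).1 := fun hh => hj1 (Fin.ext hh)
    omega
  classical
  -- minimal point b with value 1
  obtain ⟨b, hbS, hbmin⟩ : ∃ b : Fin ((T.obj ⦋m+2⦌).len + 1),
      (φ.toOrderHom b).1 = 1 ∧ ∀ j, (φ.toOrderHom j).1 = 1 → b ≤ j := by
    obtain ⟨b, hb, hmin⟩ := Finset.exists_min_image
      (Finset.univ.filter (fun j => (φ.toOrderHom j).1 = 1)) id ⟨j1, by simp only [Finset.mem_filter, Finset.mem_univ, true_and]; exact h1⟩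
    exact ⟨b, by simpa using hb, fun j hj => by simpa using hmin j (by simp only [Finset.mem_filter, Finset.mem_univ, true_and]; exact hj)⟩
  have hbpos : 1 ≤ b.1 := by
    rcases Nat.eq_zero_or_pos b.1 with hh | hh
    · exfalso
      have hb0 : b = 0 := Fin.ext hh
      rw [hb0] at hbS
      omega
    · exact hh
  set a : Fin ((T.obj ⦋m+2⦌).len + 1) := ⟨b.1 - 1, by have := b.isLt; omega⟩ with hadef
  have hab : a.1 + 1 = b.1 := by
    simp only [hadef]
    omega
  have haval : (φ.toOrderHom a).1 = 0 := by
    have hne1 : (φ.toOrderHom a).1 ≠ 1 := by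
      intro hh
      have : b ≤ a := hbmin a hh
      have : b.1 ≤ a.1 := this
      omega
    have := hval a
    omega
  have halb : a < b := by
    show a.1 < b.1
    omega
  have hup : ∀ j, b ≤ j → (φ.toOrderHom j).1 = 1 := by
    intro j hj
    have h1'' : (φ.toOrderHom b).1 ≤ (φ.toOrderHom j).1 := hmono hj
    have := hval j
    omega
  have hdown : ∀ j : Fin ((T.obj ⦋m+2⦌).len + 1), j.1 < b.1 → (φ.toOrderHom j).1 = 0 := by
    intro j hj
    have hja : j ≤ a := by
      show j.1 ≤ a.1
      omega
    have h1' : (φ.toOrderHom j).1 ≤ (φ.toOrderHom a).1 := hmono hja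
    omega
  -- every degeneracy collapses the pair (a, b)
  have hsig : ∀ i : Fin (m+2),
      (T.map (σ i)).toOrderHom a = (T.map (σ i)).toOrderHom b := by
    intro i
    by_contra hne
    have hlt : (T.map (σ i)).toOrderHom a < (T.map (σ i)).toOrderHom b :=
      lt_of_le_of_ne ((T.map (σ i)).toOrderHom.monotone (le_of_lt halb)) hne
    -- build the cut w on T.obj ⦋m+1⦌
    refine hcon i (SimplexCategory.Hom.mk
      ⟨fun j => if (T.map (σ i)).toOrderHom b ≤ j then 1 else 0, ?_⟩) ?_
    · intro c d hcd
      dsimp only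
      split_ifs with hc hd
      · exact le_refl _
      · exact absurd (le_trans hc hcd) hd
      · exact Fin.zero_le _
      · exact Fin.zero_le _
    · ext j : 3
      simp only [comp_toOrderHom, OrderHom.comp_coe, Function.comp_apply,
        Hom.toOrderHom_mk, OrderHom.coe_mk]
      show φ.toOrderHom j = if (T.map (σ i)).toOrderHom b ≤ (T.map (σ i)).toOrderHom j then 1 else 0
      by_cases hbj : b ≤ j
      · rw [if_pos ((T.map (σ i)).toOrderHom.monotone hbj)]
        exact Fin.ext (hup j hbj)
      · have hj : j.1 < b.1 := by
          have : ¬ (b.1 ≤ j.1) := hbj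
          omega
        have hja : j ≤ a := by
          show j.1 ≤ a.1
          omega
        rw [if_neg ?_]
        · exact Fin.ext (hdown j hj)
        · intro hh
          have h2 : (T.map (σ i)).toOrderHom j ≤ (T.map (σ i)).toOrderHom a :=
            (T.map (σ i)).toOrderHom.monotone hja
          exact absurd (lt_of_lt_of_le hlt (le_trans hh h2)) (lt_irrefl _)
  -- every non-injective map out of ⦋m+2⦌ collapses the pair (a, b)
  have hgen : ∀ (Z' : SimplexCategory) (g : (⦋m+2⦌ : SimplexCategory) ⟶ Z'),
      ¬ Function.Injective g.toOrderHom →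
      (T.map g).toOrderHom a = (T.map g).toOrderHom b := by
    intro Z' g hg
    obtain ⟨i, g', hgg⟩ := eq_σ_comp_of_not_injective g hg
    subst hgg
    rw [T.map_comp]
    simp only [comp_toOrderHom, OrderHom.comp_coe, Function.comp_apply]
    rw [hsig i]
  -- the six gap points and their incidence facts
  have hBeta : ∀ p q : ℕ, 1 ≤ p → 1 ≤ q → p + q ≤ 4 →
      ∃ β : ℕ,
        (∀ k : ℕ, k ≤ 3 → p ≤ k → k < p + q →
          ((T.map (mu m k)).toOrderHom a).1 ≤ β ∧ β < ((T.map (mu m k)).toOrderHom b).1) ∧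
        (∀ k : ℕ, 1 ≤ k → k ≤ 3 → (k < p ∨ p + q ≤ k) →
          β < ((T.map (mu m k)).toOrderHom a).1 ∨ ((T.map (mu m k)).toOrderHom b).1 ≤ β) := by
    intro p q hp hq hpq
    have hid : ∀ k : ℕ, k ≤ 3 → p ≤ k → k < p + q →
        (T.map (mu m k) ≫ T.map (sg m p q)) = 𝟙 (T.obj ⦋m+2⦌) := by
      intro k h3 hk1 hk2
      rw [← T.map_comp, mu_sg_id m k p q h3 hp hq hpq hk1 hk2, T.map_id]
    have hval' : ∀ k : ℕ, k ≤ 3 → p ≤ k → k < p + q →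
        ((T.map (sg m p q)).toOrderHom ((T.map (mu m k)).toOrderHom a) = a ∧
         (T.map (sg m p q)).toOrderHom ((T.map (mu m k)).toOrderHom b) = b) := by
      intro k h3 hk1 hk2
      have h' := hid k h3 hk1 hk2
      constructor
      · calc (T.map (sg m p q)).toOrderHom ((T.map (mu m k)).toOrderHom a)
            = ((T.map (mu m k)) ≫ (T.map (sg m p q))).toOrderHom a := rfl
          _ = (𝟙 (T.obj ⦋m+2⦌)).toOrderHom a := by rw [h']
          _ = a := rfl
      · calc (T.map (sg m p q)).toOrderHom ((T.map (mu m k)).toOrderHom b)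
            = ((T.map (mu m k)) ≫ (T.map (sg m p q))).toOrderHom b := rfl
          _ = (𝟙 (T.obj ⦋m+2⦌)).toOrderHom b := by rw [h']
          _ = b := rfl
    have hp3 : p ≤ 3 := by omega
    obtain ⟨βF, hβmem, hβmax⟩ : ∃ βF, (T.map (sg m p q)).toOrderHom βF = a ∧
        ∀ j, (T.map (sg m p q)).toOrderHom j = a → j ≤ βF := by
      obtain ⟨βF, hb', hmax⟩ := Finset.exists_max_image
        (Finset.univ.filter (fun j => (T.map (sg m p q)).toOrderHom j = a)) id
        ⟨(T.map (mu m p)).toOrderHom a, by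
          simp only [Finset.mem_filter, Finset.mem_univ, true_and]
          exact (hval' p hp3 (le_refl p) (by omega)).1⟩
      refine ⟨βF, ?_, ?_⟩
      · simpa using hb'
      · intro j hj
        simpa using hmax j (by
          simp only [Finset.mem_filter, Finset.mem_univ, true_and]; exact hj)
    refine ⟨βF.1, ?_, ?_⟩
    · intro k h3 hk1 hk2
      obtain ⟨hua, hub⟩ := hval' k h3 hk1 hk2
      constructor
      · exact hβmax _ hua
      · by_contra hh
        push_neg at hh
        have hle : (T.map (mu m k)).toOrderHom b ≤ βF := hh
        have h1' : (T.map (sg m p q)).toOrderHom ((T.map (mu m k)).toOrderHom b) ≤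
            (T.map (sg m p q)).toOrderHom βF := (T.map (sg m p q)).toOrderHom.monotone hle
        rw [hub, hβmem] at h1'
        have : b.1 ≤ a.1 := h1'
        omega
    · intro k h1k h3 hk
      have hninj := mu_sg_noninj m k p q h1k h3 hp hq hpq hk
      have hcol : (T.map (sg m p q)).toOrderHom ((T.map (mu m k)).toOrderHom a) =
          (T.map (sg m p q)).toOrderHom ((T.map (mu m k)).toOrderHom b) := by
        have h'' := hgen _ (mu m k ≫ sg m p q) hninj
        rw [T.map_comp] at h''
        exact h''
      by_contra hh
      push_neg at hh
      obtain ⟨hA, hB⟩ := hh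
      have hAle : (T.map (mu m k)).toOrderHom a ≤ βF := hA
      have h1' : (T.map (sg m p q)).toOrderHom ((T.map (mu m k)).toOrderHom a) ≤
          (T.map (sg m p q)).toOrderHom βF := (T.map (sg m p q)).toOrderHom.monotone hAle
      rw [hβmem] at h1'
      have hca : (T.map (sg m p q)).toOrderHom ((T.map (mu m k)).toOrderHom b) ≤ a := by
        rw [← hcol]; exact h1'
      have hblt : βF.1 + 1 < (T.obj ⦋m+4⦌).len + 1 := by
        have := ((T.map (mu m k)).toOrderHom b).isLt
        omega
      have hββ' : βF ≤ (⟨βF.1 + 1, hblt⟩ : Fin ((T.obj ⦋m+4⦌).len + 1)) := by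
        show βF.1 ≤ βF.1 + 1
        omega
      have h2' : (T.map (sg m p q)).toOrderHom βF ≤
          (T.map (sg m p q)).toOrderHom ⟨βF.1 + 1, hblt⟩ :=
        (T.map (sg m p q)).toOrderHom.monotone hββ'
      rw [hβmem] at h2'
      have h3' : (⟨βF.1 + 1, hblt⟩ : Fin ((T.obj ⦋m+4⦌).len + 1)) ≤
          (T.map (mu m k)).toOrderHom b := by
        show βF.1 + 1 ≤ ((T.map (mu m k)).toOrderHom b).1
        omega
      have h4' : (T.map (sg m p q)).toOrderHom ⟨βF.1 + 1, hblt⟩ ≤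
          (T.map (sg m p q)).toOrderHom ((T.map (mu m k)).toOrderHom b) :=
        (T.map (sg m p q)).toOrderHom.monotone h3'
      have h5' : (T.map (sg m p q)).toOrderHom ⟨βF.1 + 1, hblt⟩ = a :=
        le_antisymm (le_trans h4' hca) h2'
      have h6' := hβmax _ h5'
      have : βF.1 + 1 ≤ βF.1 := h6'
      omega
  obtain ⟨β11, hin11, hout11⟩ := hBeta 1 1 (by omega) (by omega) (by omega)
  obtain ⟨β12, hin12, hout12⟩ := hBeta 1 2 (by omega) (by omega) (by omega)
  obtain ⟨β13, hin13, hout13⟩ := hBeta 1 3 (by omega) (by omega) (by omega)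
  obtain ⟨β21, hin21, hout21⟩ := hBeta 2 1 (by omega) (by omega) (by omega)
  obtain ⟨β22, hin22, hout22⟩ := hBeta 2 2 (by omega) (by omega) (by omega)
  obtain ⟨β31, hin31, hout31⟩ := hBeta 3 1 (by omega) (by omega) (by omega)
  have f1 := hin11 1 (by omega) (by omega) (by omega)
  have f2 := hout11 2 (by omega) (by omega) (by omega)
  have f3 := hout11 3 (by omega) (by omega) (by omega)
  have f4 := hin12 1 (by omega) (by omega) (by omega)
  have f5 := hin12 2 (by omega) (by omega) (by omega)
  have f6 := hout12 3 (by omega) (by omega) (by omega)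
  have f7 := hin13 1 (by omega) (by omega) (by omega)
  have f8 := hin13 2 (by omega) (by omega) (by omega)
  have f9 := hin13 3 (by omega) (by omega) (by omega)
  have f10 := hout21 1 (by omega) (by omega) (by omega)
  have f11 := hin21 2 (by omega) (by omega) (by omega)
  have f12 := hout21 3 (by omega) (by omega) (by omega)
  have f13 := hout22 1 (by omega) (by omega) (by omega)
  have f14 := hin22 2 (by omega) (by omega) (by omega)
  have f15 := hin22 3 (by omega) (by omega) (by omega)
  have f16 := hout31 1 (by omega) (by omega) (by omega)
  have f17 := hout31 2 (by omega) (by omega) (by omega)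
  have f18 := hin31 3 (by omega) (by omega) (by omega)
  omega

end Aux

/-- For every endofunctor `T` of the simplex category and every
`k = m + 2 ≥ 2`, the simplicial set `T*(Δ¹)` has no non-degenerate `k`-simplices: every
`k`-simplex is in the image of some degeneracy map `T*(Δ¹)_{k-1} → T*(Δ¹)_k`. -/
theorem star_standardSimplex_one_degenerate (T : SimplexCategory ⥤ SimplexCategory)
    (m : ℕ) (x : (star T Δ[1]).obj (Opposite.op (SimplexCategory.mk (m + 2)))) :
    ∃ (i : Fin (m + 2)) (y : (star T Δ[1]).obj (Opposite.op (SimplexCategory.mk (m + 1)))),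
      x = (star T Δ[1]).map (SimplexCategory.σ i).op y := by
  let e₂ := SSet.stdSimplex.objEquiv (n := SimplexCategory.mk 1)
    (m := Opposite.op (T.obj (SimplexCategory.mk (m+2))))
  let e₁ := SSet.stdSimplex.objEquiv (n := SimplexCategory.mk 1)
    (m := Opposite.op (T.obj (SimplexCategory.mk (m+1))))
  obtain ⟨i, w, hw⟩ := key T m (e₂ x)
  refine ⟨i, e₁.symm w, ?_⟩
  exact ((e₂.symm_apply_apply x).symm.trans (congrArg e₂.symm hw)).trans rfl

end GES
end

section
/- The only endofunctors T of the simplex category Δ satisfying T([0]) = [0] are the three basis functors: T = Id, or T = C₀, or T = Op. -/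
open CategoryTheory Simplicial Topology

namespace GES

def opHom {X Y : SimplexCategory} (f : X ⟶ Y) : Fin (X.len + 1) →o Fin (Y.len + 1) where
  toFun k := ⟨Y.len - f.toOrderHom ⟨X.len - (k : ℕ), by omega⟩, by omega⟩
  monotone' := by
    intro a b hab
    refine Fin.mk_le_mk.mpr ?_
    have h1 : (⟨X.len - (b : ℕ), by omega⟩ : Fin (X.len + 1)) ≤ ⟨X.len - (a : ℕ), by omega⟩ :=
      Fin.mk_le_mk.mpr (by have : (a : ℕ) ≤ b := hab; omega)
    exact Nat.sub_le_sub_left (f.toOrderHom.monotone h1) Y.len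

theorem opHom_val {X Y : SimplexCategory} (f : X ⟶ Y) (k : Fin (X.len + 1)) :
    (opHom f k : ℕ) = Y.len - f.toOrderHom ⟨X.len - (k : ℕ), by omega⟩ := rfl

/-- The opposite endofunctor of the simplex category. -/
def opFunctor : SimplexCategory ⥤ SimplexCategory where
  obj X := X
  map f := SimplexCategory.Hom.mk (opHom f)
  map_id X := by
    apply SimplexCategory.Hom.ext
    rw [SimplexCategory.id_toOrderHom]
    ext k
    rw [SimplexCategory.Hom.toOrderHom_mk]
    have hk : (k : ℕ) < X.len + 1 := k.isLt
    rw [opHom_val]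
    rw [SimplexCategory.id_toOrderHom]
    show X.len - (X.len - (k : ℕ)) = (k : ℕ)
    omega
  map_comp {X Y Z} f g := by
    apply SimplexCategory.Hom.ext
    rw [SimplexCategory.comp_toOrderHom]
    ext k
    rw [SimplexCategory.Hom.toOrderHom_mk]
    show (opHom (f ≫ g) k : ℕ) = (opHom g (opHom f k) : ℕ)
    rw [opHom_val (f ≫ g), opHom_val g, SimplexCategory.comp_toOrderHom]
    show _ = Z.len - (g.toOrderHom ⟨Y.len - (Y.len -
      (f.toOrderHom ⟨X.len - (k : ℕ), by omega⟩ : ℕ)), by omega⟩ : ℕ)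
    have hk : (k : ℕ) < X.len + 1 := k.isLt
    have e1 : g.toOrderHom (⟨Y.len - (Y.len -
          (f.toOrderHom ⟨X.len - (k : ℕ), by omega⟩ : ℕ)), by omega⟩ : Fin (Y.len + 1)) =
        g.toOrderHom (f.toOrderHom ⟨X.len - (k : ℕ), by omega⟩) :=
      congrArg _ (Fin.ext (by
        show Y.len - (Y.len - (f.toOrderHom ⟨X.len - (k : ℕ), by omega⟩ : ℕ)) = _
        have := (f.toOrderHom ⟨X.len - (k : ℕ), by omega⟩).isLt
        omega))
    have e2 := congrArg Fin.val e1
    show Z.len - ((g.toOrderHom ∘ f.toOrderHom) ⟨X.len - (k : ℕ), by omega⟩ : ℕ) = _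
    simp only [Function.comp_apply]
    omega

/-- The constant endofunctor of the simplex category at `[0]`. -/
def constFunctor : SimplexCategory ⥤ SimplexCategory :=
  (CategoryTheory.Functor.const SimplexCategory).obj (SimplexCategory.mk 0)
section Classify

open SimplexCategory

variable (T : SimplexCategory ⥤ SimplexCategory)
variable (hT : T.obj (SimplexCategory.mk 0) = SimplexCategory.mk 0)

/-- The point map: image under `T` of the `i`-th point `[0] ⟶ [n]`. -/
def phi (n : ℕ) (i : Fin (n + 1)) : Fin ((T.obj (SimplexCategory.mk n)).len + 1) :=
  (eqToHom hT.symm ≫ T.map (SimplexCategory.const (SimplexCategory.mk 0)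
    (SimplexCategory.mk n) i)).toOrderHom 0

lemma phi_naturality (n m : ℕ) (f : (SimplexCategory.mk n) ⟶ (SimplexCategory.mk m))
    (i : Fin (n + 1)) :
    (T.map f).toOrderHom (phi T hT n i) = phi T hT m (f.toOrderHom i) := by
  show _ = (eqToHom hT.symm ≫ T.map (SimplexCategory.const (SimplexCategory.mk 0)
    (SimplexCategory.mk m) (f.toOrderHom i))).toOrderHom 0
  rw [← SimplexCategory.const_comp (SimplexCategory.mk 0) f i, T.map_comp]
  rfl

lemma constEval (k n : ℕ) (c : Fin (n + 1))
    (r : Fin ((T.obj (SimplexCategory.mk k)).len + 1)) :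
    (T.map (SimplexCategory.const (SimplexCategory.mk k) (SimplexCategory.mk n) c)).toOrderHom r
      = phi T hT n c := by
  rw [SimplexCategory.const_fac_thru_zero, T.map_comp]
  show (T.map (SimplexCategory.const (SimplexCategory.mk 0) (SimplexCategory.mk n) c)).toOrderHom
      ((T.map (SimplexCategory.const (SimplexCategory.mk k) (SimplexCategory.mk 0) 0)).toOrderHom r)
      = _
  have h0 : (T.obj (SimplexCategory.mk 0)).len = 0 := by rw [hT]
  have hsub : (T.map (SimplexCategory.const (SimplexCategory.mk k)
      (SimplexCategory.mk 0) 0)).toOrderHom r = (eqToHom hT.symm).toOrderHom 0 := by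
    apply Fin.ext
    have ha := ((T.map (SimplexCategory.const (SimplexCategory.mk k)
      (SimplexCategory.mk 0) 0)).toOrderHom r).isLt
    have hb := ((eqToHom hT.symm).toOrderHom (0 : Fin 1)).isLt
    omega
  rw [hsub]
  rfl

end Classify
section Classify2

open SimplexCategory

variable (T : SimplexCategory ⥤ SimplexCategory)
variable (hT : T.obj (SimplexCategory.mk 0) = SimplexCategory.mk 0)

/-- inclusion `[n] ⟶ [2n+1]` as initial segment -/
def inclHom (n : ℕ) : (SimplexCategory.mk n) ⟶ (SimplexCategory.mk (2*n+1)) :=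
  SimplexCategory.mkHom
    { toFun := fun x => ⟨x.val, by have := x.isLt; omega⟩
      monotone' := fun a b hab => Fin.mk_le_mk.mpr (Fin.le_def.mp hab) }

/-- inclusion `[n] ⟶ [2n+1]` as final segment -/
def shiftHom (n : ℕ) : (SimplexCategory.mk n) ⟶ (SimplexCategory.mk (2*n+1)) :=
  SimplexCategory.mkHom
    { toFun := fun x => ⟨x.val + (n+1), by have := x.isLt; omega⟩
      monotone' := fun a b hab => Fin.mk_le_mk.mpr (by have := Fin.le_def.mp hab; omega) }

/-- truncation `[2n+1] ⟶ [n]` -/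
def minHom (n : ℕ) : (SimplexCategory.mk (2*n+1)) ⟶ (SimplexCategory.mk n) :=
  SimplexCategory.mkHom
    { toFun := fun y => ⟨min y.val n, by omega⟩
      monotone' := fun a b hab => Fin.mk_le_mk.mpr (by have := Fin.le_def.mp hab; omega) }

/-- shifted truncation `[2n+1] ⟶ [n]` -/
def subHom (n : ℕ) : (SimplexCategory.mk (2*n+1)) ⟶ (SimplexCategory.mk n) :=
  SimplexCategory.mkHom
    { toFun := fun y => ⟨y.val - (n+1), by have := y.isLt; omega⟩
      monotone' := fun a b hab => Fin.mk_le_mk.mpr (by have := Fin.le_def.mp hab; omega) }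

lemma incl_min (n : ℕ) : inclHom n ≫ minHom n = 𝟙 (SimplexCategory.mk n) := by
  apply SimplexCategory.Hom.ext; apply OrderHom.ext; funext x; apply Fin.ext
  have hx : x.val < n + 1 := x.isLt
  show min x.val n = x.val
  omega

lemma shift_min (n : ℕ) : shiftHom n ≫ minHom n
    = SimplexCategory.const (SimplexCategory.mk n) (SimplexCategory.mk n) (Fin.last n) := by
  apply SimplexCategory.Hom.ext; apply OrderHom.ext; funext x; apply Fin.ext
  have hx : x.val < n + 1 := x.isLt
  show min (x.val + (n+1)) n = n
  omega

lemma shift_sub (n : ℕ) : shiftHom n ≫ subHom n = 𝟙 (SimplexCategory.mk n) := by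
  apply SimplexCategory.Hom.ext; apply OrderHom.ext; funext x; apply Fin.ext
  show x.val + (n+1) - (n+1) = x.val
  omega

lemma incl_sub (n : ℕ) : inclHom n ≫ subHom n
    = SimplexCategory.const (SimplexCategory.mk n) (SimplexCategory.mk n) 0 := by
  apply SimplexCategory.Hom.ext; apply OrderHom.ext; funext x; apply Fin.ext
  have hx : x.val < n + 1 := x.isLt
  show x.val - (n+1) = 0
  omega

lemma sandwich (n : ℕ) (r : Fin ((T.obj (SimplexCategory.mk n)).len + 1)) :
    (phi T hT n 0 ≤ r ∧ r ≤ phi T hT n (Fin.last n)) ∨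
    (phi T hT n (Fin.last n) ≤ r ∧ r ≤ phi T hT n 0) := by
  have e1 : (T.map (minHom n)).toOrderHom ((T.map (shiftHom n)).toOrderHom r)
      = phi T hT n (Fin.last n) := by
    have h9 := congrArg (fun u => (T.map u).toOrderHom r) (shift_min n)
    simp only [Functor.map_comp, SimplexCategory.comp_toOrderHom, OrderHom.comp_coe,
      Function.comp_apply] at h9
    rw [constEval T hT] at h9
    exact h9
  have e2 : (T.map (minHom n)).toOrderHom ((T.map (inclHom n)).toOrderHom r) = r := by
    have h9 := congrArg (fun u => (T.map u).toOrderHom r) (incl_min n)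
    simpa using h9
  have e3 : (T.map (subHom n)).toOrderHom ((T.map (shiftHom n)).toOrderHom r) = r := by
    have h9 := congrArg (fun u => (T.map u).toOrderHom r) (shift_sub n)
    simpa using h9
  have e4 : (T.map (subHom n)).toOrderHom ((T.map (inclHom n)).toOrderHom r)
      = phi T hT n 0 := by
    have h9 := congrArg (fun u => (T.map u).toOrderHom r) (incl_sub n)
    simp only [Functor.map_comp, SimplexCategory.comp_toOrderHom, OrderHom.comp_coe,
      Function.comp_apply] at h9
    rw [constEval T hT] at h9
    exact h9
  rcases le_total ((T.map (shiftHom n)).toOrderHom r) ((T.map (inclHom n)).toOrderHom r)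
    with hle | hle
  · right
    constructor
    · have := (T.map (minHom n)).toOrderHom.monotone hle
      rw [e1, e2] at this; exact this
    · have := (T.map (subHom n)).toOrderHom.monotone hle
      rw [e3, e4] at this; exact this
  · left
    constructor
    · have := (T.map (subHom n)).toOrderHom.monotone hle
      rw [e3, e4] at this; exact this
    · have := (T.map (minHom n)).toOrderHom.monotone hle
      rw [e1, e2] at this; exact this

end Classify2
section Classify3

open SimplexCategory

variable (T : SimplexCategory ⥤ SimplexCategory)
variable (hT : T.obj (SimplexCategory.mk 0) = SimplexCategory.mk 0)

/-- the coface-like map `[n] ⟶ [n+1]` skipping `j+1` -/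
def gapA (n j : ℕ) (_ : j + 1 ≤ n) : (SimplexCategory.mk n) ⟶ (SimplexCategory.mk (n+1)) :=
  SimplexCategory.mkHom
    { toFun := fun x => ⟨x.val + min (x.val - j) 1, by have := x.isLt; omega⟩
      monotone' := fun a b hab => Fin.mk_le_mk.mpr (by have := Fin.le_def.mp hab; omega) }

/-- the codegeneracy-like map `[n+1] ⟶ [n]` merging `j, j+1` -/
def gapB (n j : ℕ) (hj : j + 1 ≤ n) : (SimplexCategory.mk (n+1)) ⟶ (SimplexCategory.mk n) :=
  SimplexCategory.mkHom
    { toFun := fun y => ⟨y.val - min (y.val - j) 1, by have := y.isLt; omega⟩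
      monotone' := fun a b hab => Fin.mk_le_mk.mpr (by have := Fin.le_def.mp hab; omega) }

/-- the codegeneracy-like map `[n+1] ⟶ [n]` merging `j+1, j+2` -/
def gapB' (n j : ℕ) (hj : j + 1 ≤ n) : (SimplexCategory.mk (n+1)) ⟶ (SimplexCategory.mk n) :=
  SimplexCategory.mkHom
    { toFun := fun y => ⟨y.val - min (y.val - (j+1)) 1, by have := y.isLt; omega⟩
      monotone' := fun a b hab => Fin.mk_le_mk.mpr (by have := Fin.le_def.mp hab; omega) }

lemma gapA_gapB (n j : ℕ) (hj : j + 1 ≤ n) :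
    gapA n j hj ≫ gapB n j hj = 𝟙 (SimplexCategory.mk n) := by
  apply SimplexCategory.Hom.ext; apply OrderHom.ext; funext x; apply Fin.ext
  have hx : x.val < n + 1 := x.isLt
  show x.val + min (x.val - j) 1 - min (x.val + min (x.val - j) 1 - j) 1 = x.val
  omega

lemma gapA_gapB' (n j : ℕ) (hj : j + 1 ≤ n) :
    gapA n j hj ≫ gapB' n j hj = 𝟙 (SimplexCategory.mk n) := by
  apply SimplexCategory.Hom.ext; apply OrderHom.ext; funext x; apply Fin.ext
  have hx : x.val < n + 1 := x.isLt
  show x.val + min (x.val - j) 1 - min (x.val + min (x.val - j) 1 - (j+1)) 1 = x.val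
  omega

lemma gap (n : ℕ) (i j : Fin (n+1)) (hij : (i : ℕ) + 1 = (j : ℕ))
    (r : Fin ((T.obj (SimplexCategory.mk n)).len + 1)) :
    (r ≤ phi T hT n i ∧ r ≤ phi T hT n j) ∨
    (phi T hT n i ≤ r ∧ phi T hT n j ≤ r) := by
  have hj : (i : ℕ) + 1 ≤ n := by have := j.isLt; omega
  have hc : (i : ℕ) + 1 < n + 2 := by omega
  set c := phi T hT (n+1) ⟨(i : ℕ) + 1, hc⟩ with hcdef
  set z := (T.map (gapA n i.val hj)).toOrderHom r with hzdef
  have eB : (T.map (gapB n i.val hj)).toOrderHom z = r := by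
    have h9 := congrArg (fun u => (T.map u).toOrderHom r) (gapA_gapB n i.val hj)
    simpa using h9
  have eB' : (T.map (gapB' n i.val hj)).toOrderHom z = r := by
    have h9 := congrArg (fun u => (T.map u).toOrderHom r) (gapA_gapB' n i.val hj)
    simpa using h9
  have cB : (T.map (gapB n i.val hj)).toOrderHom c = phi T hT n i := by
    rw [hcdef, phi_naturality T hT (n+1) n (gapB n i.val hj) ⟨(i : ℕ) + 1, hc⟩]
    refine congrArg (phi T hT n) (Fin.ext ?_)
    show (i : ℕ) + 1 - min ((i : ℕ) + 1 - (i : ℕ)) 1 = (i : ℕ)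
    omega
  have cB' : (T.map (gapB' n i.val hj)).toOrderHom c = phi T hT n j := by
    rw [hcdef, phi_naturality T hT (n+1) n (gapB' n i.val hj) ⟨(i : ℕ) + 1, hc⟩]
    refine congrArg (phi T hT n) (Fin.ext ?_)
    show (i : ℕ) + 1 - min ((i : ℕ) + 1 - ((i : ℕ) + 1)) 1 = (j : ℕ)
    omega
  rcases le_total z c with hle | hle
  · left
    constructor
    · have := (T.map (gapB n i.val hj)).toOrderHom.monotone hle
      rw [eB, cB] at this; exact this
    · have := (T.map (gapB' n i.val hj)).toOrderHom.monotone hle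
      rw [eB', cB'] at this; exact this
  · right
    constructor
    · have := (T.map (gapB n i.val hj)).toOrderHom.monotone hle
      rw [eB, cB] at this; exact this
    · have := (T.map (gapB' n i.val hj)).toOrderHom.monotone hle
      rw [eB', cB'] at this; exact this

/-- the edge `[1] ⟶ [n]` with endpoints `i ≤ j` -/
def edgeHom (n : ℕ) (i j : Fin (n+1)) (hij : i ≤ j) :
    (SimplexCategory.mk 1) ⟶ (SimplexCategory.mk n) :=
  SimplexCategory.mkHom
    { toFun := fun x => if x.val = 0 then i else j
      monotone' := fun a b hab => by
        by_cases ha : a.val = 0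
        · by_cases hb : b.val = 0 <;> simp [ha, hb, hij]
        · have hb : ¬ b.val = 0 := by have := Fin.le_def.mp hab; omega
          simp [ha, hb] }

lemma edgeHom_zero (n : ℕ) (i j : Fin (n+1)) (hij : i ≤ j) :
    (edgeHom n i j hij).toOrderHom 0 = i := by
  show (if (0 : Fin 2).val = 0 then i else j) = i
  norm_num

lemma edgeHom_one (n : ℕ) (i j : Fin (n+1)) (hij : i ≤ j) :
    (edgeHom n i j hij).toOrderHom 1 = j := by
  show (if (1 : Fin 2).val = 0 then i else j) = j
  norm_num

/-- the threshold map `[n] ⟶ [1]` -/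
def rhoHom (n : ℕ) (t : ℕ) : (SimplexCategory.mk n) ⟶ (SimplexCategory.mk 1) :=
  SimplexCategory.mkHom
    { toFun := fun x => if x.val < t then 0 else 1
      monotone' := fun a b hab => by
        by_cases ha : a.val < t
        · by_cases hb : b.val < t <;> simp [ha, hb]
        · have hb : ¬ b.val < t := by have := Fin.le_def.mp hab; omega
          simp [ha, hb] }

lemma rhoHom_lt (n t : ℕ) (x : Fin (n+1)) (hx : x.val < t) :
    (rhoHom n t).toOrderHom x = 0 := by
  show (if x.val < t then (0 : Fin 2) else 1) = 0
  simp [hx]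

lemma rhoHom_ge (n t : ℕ) (x : Fin (n+1)) (hx : ¬ x.val < t) :
    (rhoHom n t).toOrderHom x = 1 := by
  show (if x.val < t then (0 : Fin 2) else 1) = 1
  simp [hx]

lemma phi_le (hp : phi T hT 1 0 ≤ phi T hT 1 1) {n : ℕ} {i j : Fin (n+1)} (hij : i ≤ j) :
    phi T hT n i ≤ phi T hT n j := by
  have h0 : (T.map (edgeHom n i j hij)).toOrderHom (phi T hT 1 0) = phi T hT n i := by
    rw [phi_naturality T hT 1 n]
    exact congrArg (phi T hT n) (edgeHom_zero n i j hij)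
  have h1 : (T.map (edgeHom n i j hij)).toOrderHom (phi T hT 1 1) = phi T hT n j := by
    rw [phi_naturality T hT 1 n]
    exact congrArg (phi T hT n) (edgeHom_one n i j hij)
  rw [← h0, ← h1]
  exact (T.map (edgeHom n i j hij)).toOrderHom.monotone hp

lemma phi_ge (hp : phi T hT 1 1 ≤ phi T hT 1 0) {n : ℕ} {i j : Fin (n+1)} (hij : i ≤ j) :
    phi T hT n j ≤ phi T hT n i := by
  have h0 : (T.map (edgeHom n i j hij)).toOrderHom (phi T hT 1 0) = phi T hT n i := by
    rw [phi_naturality T hT 1 n]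
    exact congrArg (phi T hT n) (edgeHom_zero n i j hij)
  have h1 : (T.map (edgeHom n i j hij)).toOrderHom (phi T hT 1 1) = phi T hT n j := by
    rw [phi_naturality T hT 1 n]
    exact congrArg (phi T hT n) (edgeHom_one n i j hij)
  rw [← h0, ← h1]
  exact (T.map (edgeHom n i j hij)).toOrderHom.monotone hp

lemma phi_collapse {n : ℕ} {i j : Fin (n+1)} (hij : i < j)
    (he : phi T hT n i = phi T hT n j) : phi T hT 1 0 = phi T hT 1 1 := by
  have h0 : (T.map (rhoHom n j.val)).toOrderHom (phi T hT n i) = phi T hT 1 0 := by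
    rw [phi_naturality T hT n 1]
    exact congrArg (phi T hT 1) (rhoHom_lt n j.val i (Fin.lt_def.mp hij))
  have h1 : (T.map (rhoHom n j.val)).toOrderHom (phi T hT n j) = phi T hT 1 1 := by
    rw [phi_naturality T hT n 1]
    exact congrArg (phi T hT 1) (rhoHom_ge n j.val j (by omega))
  rw [← h0, ← h1, he]

end Classify3
section Classify4

open SimplexCategory

variable (T : SimplexCategory ⥤ SimplexCategory)
variable (hT : T.obj (SimplexCategory.mk 0) = SimplexCategory.mk 0)

lemma surj_of_mono (hp : phi T hT 1 0 ≤ phi T hT 1 1) (n : ℕ)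
    (r : Fin ((T.obj (SimplexCategory.mk n)).len + 1)) :
    ∃ i, phi T hT n i = r := by
  classical
  rcases sandwich T hT n r with ⟨h1, h2⟩ | ⟨h1, h2⟩
  · have hne : (Finset.univ.filter (fun i : Fin (n+1) => phi T hT n i ≤ r)).Nonempty :=
      ⟨0, by simp [h1]⟩
    set j := (Finset.univ.filter (fun i : Fin (n+1) => phi T hT n i ≤ r)).max' hne with hjdef
    have hjr : phi T hT n j ≤ r := by
      have hm := Finset.max'_mem _ hne
      exact (Finset.mem_filter.mp hm).2
    by_cases hcase : (j : ℕ) = n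
    · refine ⟨j, le_antisymm hjr ?_⟩
      have hlast : j = Fin.last n := Fin.ext (by simpa using hcase)
      rw [hlast]; exact h2
    · have hb : (j : ℕ) + 1 < n + 1 := by have := j.isLt; omega
      have hnot : ¬ phi T hT n ⟨(j : ℕ) + 1, hb⟩ ≤ r := by
        intro hle
        have hmem : (⟨(j : ℕ) + 1, hb⟩ : Fin (n+1)) ∈
            Finset.univ.filter (fun i : Fin (n+1) => phi T hT n i ≤ r) := by simp [hle]
        have hmax := Finset.le_max' _ _ hmem
        rw [← hjdef] at hmax
        have hv : (j : ℕ) + 1 ≤ (j : ℕ) := Fin.le_def.mp hmax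
        omega
      rcases gap T hT n j ⟨(j : ℕ) + 1, hb⟩ rfl r with ⟨g1, g2⟩ | ⟨g1, g2⟩
      · exact ⟨j, le_antisymm hjr g1⟩
      · exact absurd g2 hnot
  · have h3 : phi T hT n 0 ≤ phi T hT n (Fin.last n) := phi_le T hT hp (Fin.zero_le _)
    exact ⟨0, le_antisymm (le_trans h3 h1) h2⟩

lemma surj_of_anti (hp : phi T hT 1 1 ≤ phi T hT 1 0) (n : ℕ)
    (r : Fin ((T.obj (SimplexCategory.mk n)).len + 1)) :
    ∃ i, phi T hT n i = r := by
  classical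
  rcases sandwich T hT n r with ⟨h1, h2⟩ | ⟨h1, h2⟩
  · have h3 : phi T hT n (Fin.last n) ≤ phi T hT n 0 := phi_ge T hT hp (Fin.zero_le _)
    exact ⟨Fin.last n, le_antisymm (le_trans h3 h1) h2⟩
  · have hne : (Finset.univ.filter (fun i : Fin (n+1) => r ≤ phi T hT n i)).Nonempty :=
      ⟨0, by simp [h2]⟩
    set j := (Finset.univ.filter (fun i : Fin (n+1) => r ≤ phi T hT n i)).max' hne with hjdef
    have hjr : r ≤ phi T hT n j := by
      have hm := Finset.max'_mem _ hne
      exact (Finset.mem_filter.mp hm).2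
    by_cases hcase : (j : ℕ) = n
    · refine ⟨j, le_antisymm ?_ hjr⟩
      have hlast : j = Fin.last n := Fin.ext (by simpa using hcase)
      rw [hlast]; exact h1
    · have hb : (j : ℕ) + 1 < n + 1 := by have := j.isLt; omega
      have hnot : ¬ r ≤ phi T hT n ⟨(j : ℕ) + 1, hb⟩ := by
        intro hle
        have hmem : (⟨(j : ℕ) + 1, hb⟩ : Fin (n+1)) ∈
            Finset.univ.filter (fun i : Fin (n+1) => r ≤ phi T hT n i) := by simp [hle]
        have hmax := Finset.le_max' _ _ hmem
        rw [← hjdef] at hmax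
        have hv : (j : ℕ) + 1 ≤ (j : ℕ) := Fin.le_def.mp hmax
        omega
      rcases gap T hT n j ⟨(j : ℕ) + 1, hb⟩ rfl r with ⟨g1, g2⟩ | ⟨g1, g2⟩
      · exact absurd g2 hnot
      · exact ⟨j, le_antisymm g1 hjr⟩

def frev (a : ℕ) (j : Fin (a+1)) : Fin (a+1) := ⟨a - j.val, by omega⟩
lemma frev_lt_frev {a : ℕ} {u v : Fin (a+1)} (huv : u < v) : frev a v < frev a u := by
  have h1 := Fin.lt_def.mp huv
  have h2 := v.isLt
  exact Fin.mk_lt_mk.mpr (by omega)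
def conj (a : ℕ) (f : Fin (a+1) → Fin (a+1)) (j : Fin (a+1)) : Fin (a+1) :=
  frev a (f (frev a j))
lemma auxA' {a b : ℕ} {f : Fin (a+1) → Fin (b+1)} (hf : StrictMono f) :
    ∀ (v : ℕ) (hv : v < a + 1), v ≤ (f ⟨v, hv⟩ : ℕ) := by
  intro v
  induction v with
  | zero => intro hv; exact Nat.zero_le _
  | succ w ih =>
    intro hv
    have hw : w < a + 1 := by omega
    have h1 := Fin.lt_def.mp (hf (show (⟨w, hw⟩ : Fin (a+1)) < ⟨w+1, hv⟩ from
      Fin.mk_lt_mk.mpr (Nat.lt_succ_self w)))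
    have h2 := ih hw
    omega
lemma auxB {a : ℕ} {f : Fin (a+1) → Fin (a+1)} (hf : StrictMono f) :
    ∀ i, (f i : ℕ) = (i : ℕ) := by
  intro i
  have h1 : (i : ℕ) ≤ (f i : ℕ) := auxA' hf i.val i.isLt
  have hg : StrictMono (conj a f) := fun u v huv => frev_lt_frev (hf (frev_lt_frev huv))
  have hb : a - i.val < a + 1 := by omega
  have h2 := auxA' hg (a - i.val) hb
  have e : frev a ⟨a - i.val, hb⟩ = i := by
    apply Fin.ext
    have := i.isLt
    show a - (a - i.val) = i.val
    omega
  have h2' : (conj a f ⟨a - i.val, hb⟩ : ℕ) = a - (f i : ℕ) := by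
    simp only [conj, e]
    rfl
  have h5 := (f i).isLt
  have h6 := i.isLt
  omega

end Classify4
section Classify5

open SimplexCategory

variable (T : SimplexCategory ⥤ SimplexCategory)
variable (hT : T.obj (SimplexCategory.mk 0) = SimplexCategory.mk 0)

lemma eqToHom_sandwich {A A' B B' : SimplexCategory} (eA : A = A') (eB : B' = B)
    (u : A' ⟶ B') (hA : A.len + 1 = A'.len + 1) (k : Fin (A.len + 1)) :
    ((eqToHom eA ≫ u ≫ eqToHom eB).toOrderHom k : ℕ)
      = (u.toOrderHom (Fin.cast hA k) : ℕ) := by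
  subst eA
  subst eB
  simp

lemma homExtZero {A B : SimplexCategory} (hB : B.len = 0) (u v : A ⟶ B) : u = v := by
  apply SimplexCategory.Hom.ext
  apply OrderHom.ext
  funext k
  apply Fin.ext
  have h1 := (u.toOrderHom k).isLt
  have h2 := (v.toOrderHom k).isLt
  omega

lemma lenEq (hinj : ∀ n : ℕ, Function.Injective (phi T hT n))
    (hsurj : ∀ (n : ℕ) (r : Fin ((T.obj (SimplexCategory.mk n)).len + 1)), ∃ i, phi T hT n i = r)
    (n : ℕ) : (T.obj (SimplexCategory.mk n)).len = n := by
  have h1 : Fintype.card (Fin (n+1))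
      ≤ Fintype.card (Fin ((T.obj (SimplexCategory.mk n)).len + 1)) :=
    Fintype.card_le_of_injective _ (hinj n)
  have h2 : Fintype.card (Fin ((T.obj (SimplexCategory.mk n)).len + 1))
      ≤ Fintype.card (Fin (n+1)) :=
    Fintype.card_le_of_surjective (phi T hT n) (fun r => hsurj n r)
  simp only [Fintype.card_fin] at h1 h2
  omega

lemma idCase (hp : phi T hT 1 0 < phi T hT 1 1) : T = 𝟭 SimplexCategory := by
  have hsm : ∀ n : ℕ, StrictMono (phi T hT n) := fun n i j hij =>
    lt_of_le_of_ne (phi_le T hT hp.le hij.le)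
      (fun he => absurd (phi_collapse T hT hij he) hp.ne)
  have hsurj : ∀ (n : ℕ) (r), ∃ i, phi T hT n i = r := surj_of_mono T hT hp.le
  have hL : ∀ n : ℕ, (T.obj (SimplexCategory.mk n)).len = n :=
    lenEq T hT (fun n => (hsm n).injective) hsurj
  have hval : ∀ (n : ℕ) (i : Fin (n+1)), (phi T hT n i : ℕ) = (i : ℕ) := by
    intro n i
    have hLn := hL n
    let ψ : Fin (n+1) → Fin (n+1) := fun m =>
      ⟨(phi T hT n m : ℕ), by have := (phi T hT n m).isLt; omega⟩
    have hψ : StrictMono ψ := fun u v huv =>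
      Fin.mk_lt_mk.mpr (Fin.lt_def.mp (hsm n huv))
    exact auxB hψ i
  have hobj : ∀ X : SimplexCategory, T.obj X = X := fun X =>
    SimplexCategory.ext (hL X.len)
  refine CategoryTheory.Functor.ext hobj ?_
  intro X Y f
  induction X using SimplexCategory.rec with | _ n =>
  induction Y using SimplexCategory.rec with | _ m =>
  apply SimplexCategory.Hom.ext
  apply OrderHom.ext
  funext k
  apply Fin.ext
  simp only [CategoryTheory.Functor.id_map]
  rw [eqToHom_sandwich (hobj (SimplexCategory.mk n)) (hobj (SimplexCategory.mk m)).symm f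
    (by rw [hobj (SimplexCategory.mk n)]) k]
  have hkb : (k : ℕ) < n + 1 := by
    have h5 : (T.obj (SimplexCategory.mk n)).len = n := hL n
    have := k.isLt
    omega
  have hk : phi T hT n ⟨(k : ℕ), hkb⟩ = k := Fin.ext (hval n ⟨(k : ℕ), hkb⟩)
  conv_lhs => rw [← hk]
  rw [phi_naturality T hT n m f ⟨(k : ℕ), hkb⟩, hval m]
  exact congrArg (fun t => (f.toOrderHom t : ℕ)) (Fin.ext rfl)

lemma constCase (hp : phi T hT 1 0 = phi T hT 1 1) : T = constFunctor := by
  have hcon : ∀ (n : ℕ) (i : Fin (n+1)), phi T hT n i = phi T hT n 0 := by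
    intro n i
    exact le_antisymm (phi_ge T hT hp.ge (Fin.zero_le i)) (phi_le T hT hp.le (Fin.zero_le i))
  have hL : ∀ n : ℕ, (T.obj (SimplexCategory.mk n)).len = 0 := by
    intro n
    obtain ⟨i, hi⟩ := surj_of_mono T hT hp.le n (Fin.last _)
    obtain ⟨i', hi'⟩ := surj_of_mono T hT hp.le n 0
    have he : (Fin.last ((T.obj (SimplexCategory.mk n)).len))
        = (0 : Fin ((T.obj (SimplexCategory.mk n)).len + 1)) := by
      rw [← hi, ← hi', hcon n i, hcon n i']
    have hv := congrArg Fin.val he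
    simpa using hv
  have hobj : ∀ X : SimplexCategory, T.obj X = constFunctor.obj X := fun X =>
    SimplexCategory.ext (hL X.len)
  refine CategoryTheory.Functor.ext hobj ?_
  intro X Y f
  exact homExtZero (hL Y.len) _ _

lemma opCase (hp : phi T hT 1 1 < phi T hT 1 0) : T = opFunctor := by
  have hsa : ∀ (n : ℕ) {i j : Fin (n+1)}, i < j → phi T hT n j < phi T hT n i := fun n i j hij =>
    lt_of_le_of_ne (phi_ge T hT hp.le hij.le)
      (fun he => absurd (phi_collapse T hT hij he.symm) hp.ne')
  have hinj : ∀ n : ℕ, Function.Injective (phi T hT n) := by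
    intro n i j he
    rcases lt_trichotomy i j with hlt | heq | hlt
    · exact absurd he (hsa n hlt).ne'
    · exact heq
    · exact absurd he (hsa n hlt).ne
  have hsurj : ∀ (n : ℕ) (r), ∃ i, phi T hT n i = r := surj_of_anti T hT hp.le
  have hL : ∀ n : ℕ, (T.obj (SimplexCategory.mk n)).len = n := lenEq T hT hinj hsurj
  have hval : ∀ (n : ℕ) (i : Fin (n+1)), (phi T hT n i : ℕ) = n - (i : ℕ) := by
    intro n i
    have hLn := hL n
    let ψ : Fin (n+1) → Fin (n+1) := fun m =>
      ⟨(phi T hT n (frev n m) : ℕ), by have := (phi T hT n (frev n m)).isLt; omega⟩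
    have hψ : StrictMono ψ := fun u v huv =>
      Fin.mk_lt_mk.mpr (Fin.lt_def.mp (hsa n (frev_lt_frev huv)))
    have h6 := auxB hψ (frev n i)
    have h7 : frev n (frev n i) = i := by
      apply Fin.ext
      have := i.isLt
      show n - (n - (i : ℕ)) = (i : ℕ)
      omega
    have h8 : (ψ (frev n i) : ℕ) = (phi T hT n i : ℕ) := by
      show (phi T hT n (frev n (frev n i)) : ℕ) = _
      rw [h7]
    rw [h8] at h6
    rw [h6]
    rfl
  have hobj : ∀ X : SimplexCategory, T.obj X = opFunctor.obj X := fun X =>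
    SimplexCategory.ext (hL X.len)
  refine CategoryTheory.Functor.ext hobj ?_
  intro X Y f
  induction X using SimplexCategory.rec with | _ n =>
  induction Y using SimplexCategory.rec with | _ m =>
  apply SimplexCategory.Hom.ext
  apply OrderHom.ext
  funext k
  apply Fin.ext
  rw [eqToHom_sandwich (hobj (SimplexCategory.mk n)) (hobj (SimplexCategory.mk m)).symm
    (opFunctor.map f) (by rw [hobj (SimplexCategory.mk n)]) k]
  have hkb : (k : ℕ) < n + 1 := by
    have h5 : (T.obj (SimplexCategory.mk n)).len = n := hL n
    have := k.isLt
    omega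
  have hkb2 : n - (k : ℕ) < n + 1 := by omega
  have hk : phi T hT n ⟨n - (k : ℕ), hkb2⟩ = k := by
    apply Fin.ext
    rw [hval n]
    show n - (n - (k : ℕ)) = (k : ℕ)
    omega
  conv_lhs => rw [← hk]
  rw [phi_naturality T hT n m f ⟨n - (k : ℕ), hkb2⟩, hval m]
  show m - (f.toOrderHom ⟨n - (k : ℕ), hkb2⟩ : ℕ) = (opHom f (Fin.cast _ k) : ℕ)
  rw [opHom_val]
  exact congrArg (fun t => m - (f.toOrderHom t : ℕ)) (Fin.ext rfl)

end Classify5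

/-- The only endofunctors of the simplex category sending `[0]` to
`[0]` are the three basis functors `Id`, `C₀` and `Op`. -/
theorem eq_basis_of_obj_zero_eq_zero (T : SimplexCategory ⥤ SimplexCategory)
    (h : T.obj (SimplexCategory.mk 0) = SimplexCategory.mk 0) :
    T = 𝟭 SimplexCategory ∨ T = constFunctor ∨ T = opFunctor := by
  rcases lt_trichotomy (phi T h 1 0) (phi T h 1 1) with hc | hc | hc
  · exact Or.inl (idCase T h hc)
  · exact Or.inr (Or.inl (constCase T h hc))
  · exact Or.inr (Or.inr (opCase T h hc))
end GES
end
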